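/- arXiv:1807.02174 — 2 statements merged into one kernel-verified Lean document; each statement's English description precedes it below -/
import Mathlib

section
/- Let 1 ≤ p < ∞ and assume that the measure μ on ℝ is Lipschitz p-admissible within a bounded open interval I₀, and let θ > 1. Then dμ = w dt on I₀ for some nonnegative measurable weight w, and w satisfies the A_p condition within θ^{-1}I₀ (the interval with the same midpoint as I₀ and length |I₀|/θ), with an A_p constant depending only on θ and on the admissibility constants of μ. -/
open MeasureTheory Set Filter
open scoped ENNReal NNReal Topology

noncomputable section

/-- A "measure on ℝ" in the sense of the paper: positive and finite on all
nonempty bounded open intervals (balls). -/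
def IsMeasureOnR (μ : Measure ℝ) : Prop :=
  ∀ a b : ℝ, a < b → 0 < μ (Ioo a b) ∧ μ (Ioo a b) < ⊤

/-- `g` is an upper gradient of `u` on the interval `J ⊆ ℝ`. -/
def IsUpperGradientOn (g u : ℝ → ℝ) (J : Set ℝ) : Prop :=
  (∀ x, 0 ≤ g x) ∧ Measurable g ∧
    ∀ a b : ℝ, a ≤ b → Icc a b ⊆ J →
      ENNReal.ofReal |u b - u a| ≤ ∫⁻ t in Icc a b, ENNReal.ofReal (g t)

/-- `μ` is doubling within the set `B₀` with constant `Cd`. -/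
def DoublingWithinC (μ : Measure ℝ) (Cd : ℝ≥0∞) (B₀ : Set ℝ) : Prop :=
  ∀ x r : ℝ, 0 < r → Ioo (x - r) (x + r) ⊆ B₀ →
    μ (Ioo (x - 2*r) (x + 2*r)) ≤ Cd * μ (Ioo (x - r) (x + r))

/-- `μ` is doubling within the set `B₀`. -/
def DoublingWithin (μ : Measure ℝ) (B₀ : Set ℝ) : Prop :=
  ∃ Cd : ℝ≥0∞, 0 < Cd ∧ Cd < ⊤ ∧ DoublingWithinC μ Cd B₀

/-- The left-hand side `⨍_B |u - u_B| dμ` of the Poincaré inequality,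
computed in `ℝ≥0∞`. -/
def PoinLHS (μ : Measure ℝ) (u : ℝ → ℝ) (B : Set ℝ) : ℝ≥0∞ :=
  (∫⁻ t in B, ENNReal.ofReal |u t - ⨍ s in B, u s ∂μ| ∂μ) / μ B

/-- The quantity `(⨍_B g^p dμ)^(1/p)` computed in `ℝ≥0∞`. -/
def PoinRHS (μ : Measure ℝ) (g : ℝ → ℝ≥0∞) (p : ℝ) (B : Set ℝ) : ℝ≥0∞ :=
  ((∫⁻ t in B, g t ^ p ∂μ) / μ B) ^ (1/p)

/-- `μ` supports the `p`-Poincaré inequality within `B₀` with constant `C`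
and dilation constant `lam`. -/
def PoincareWithinC (μ : Measure ℝ) (p C lam : ℝ) (B₀ : Set ℝ) : Prop :=
  ∀ x r : ℝ, 0 < r → Ioo (x - r) (x + r) ⊆ B₀ →
    ∀ u g : ℝ → ℝ,
      IntegrableOn u (Ioo (x - lam*r) (x + lam*r)) μ →
      IsUpperGradientOn g u (Ioo (x - lam*r) (x + lam*r)) →
      PoinLHS μ u (Ioo (x - r) (x + r)) ≤
        ENNReal.ofReal (C * r) *
          PoinRHS μ (fun t => ENNReal.ofReal (g t)) p (Ioo (x - lam*r) (x + lam*r))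

/-- `μ` supports the `p`-Poincaré inequality within `B₀`. -/
def PoincareWithin (μ : Measure ℝ) (p : ℝ) (B₀ : Set ℝ) : Prop :=
  ∃ C > (0:ℝ), ∃ lam ≥ (1:ℝ), PoincareWithinC μ p C lam B₀

/-- `μ` is `p`-admissible within `B₀`. -/
def AdmissibleWithin (μ : Measure ℝ) (p : ℝ) (B₀ : Set ℝ) : Prop :=
  DoublingWithin μ B₀ ∧ PoincareWithin μ p B₀

/-- `μ` is locally `p`-admissible. -/
def LocallyAdmissible (μ : Measure ℝ) (p : ℝ) : Prop :=
  ∀ x : ℝ, ∃ R > (0:ℝ), AdmissibleWithin μ p (Ioo (x - R) (x + R))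

/-- The pointwise upper Lipschitz constant
`Lip u(x) = limsup_{y→x, y ∈ s} |u(y)-u(x)|/|y-x|`, computed in `ℝ≥0∞`. -/
def eLipWithin (u : ℝ → ℝ) (s : Set ℝ) (x : ℝ) : ℝ≥0∞ :=
  Filter.limsup (fun y => ENNReal.ofReal (|u y - u x| / |y - x|)) (𝓝[s \ {x}] x)

/-- `μ` supports the Lipschitz `p`-Poincaré inequality within `B₀` with
constant `C` and dilation constant `lam`. -/
def LipPoincareWithinC (μ : Measure ℝ) (p C lam : ℝ) (B₀ : Set ℝ) : Prop :=
  ∀ x r : ℝ, 0 < r → Ioo (x - r) (x + r) ⊆ B₀ →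
    ∀ (u : ℝ → ℝ) (K : ℝ≥0), LipschitzOnWith K u (Ioo (x - lam*r) (x + lam*r)) →
      PoinLHS μ u (Ioo (x - r) (x + r)) ≤
        ENNReal.ofReal (C * r) *
          PoinRHS μ (eLipWithin u (Ioo (x - lam*r) (x + lam*r))) p
            (Ioo (x - lam*r) (x + lam*r))

/-- `μ` supports the Lipschitz `p`-Poincaré inequality within `B₀`. -/
def LipPoincareWithin (μ : Measure ℝ) (p : ℝ) (B₀ : Set ℝ) : Prop :=
  ∃ C > (0:ℝ), ∃ lam ≥ (1:ℝ), LipPoincareWithinC μ p C lam B₀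

/-- `μ` is Lipschitz `p`-admissible within `B₀`. -/
def LipAdmissibleWithin (μ : Measure ℝ) (p : ℝ) (B₀ : Set ℝ) : Prop :=
  DoublingWithin μ B₀ ∧ LipPoincareWithin μ p B₀

/-- `μ` is locally Lipschitz `p`-admissible. -/
def LocallyLipAdmissible (μ : Measure ℝ) (p : ℝ) : Prop :=
  ∀ x : ℝ, ∃ R > (0:ℝ), LipAdmissibleWithin μ p (Ioo (x - R) (x + R))

/-- The Muckenhoupt `A_p` condition for `w` on the set `B` with constant `C`
(for `p = 1` and `p ≠ 1` respectively). -/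
def ApOn (p : ℝ) (w : ℝ → ℝ) (B : Set ℝ) (C : ℝ) : Prop :=
  (p = 1 →
    (∫⁻ x in B, ENNReal.ofReal (w x)) / volume B ≤
      ENNReal.ofReal C * essInf (fun x => ENNReal.ofReal (w x)) (volume.restrict B)) ∧
  (p ≠ 1 →
    (∫⁻ x in B, ENNReal.ofReal (w x)) / volume B ≤
      ENNReal.ofReal C *
        ((∫⁻ x in B, ENNReal.ofReal (w x) ^ (1/(1-p))) / volume B) ^ (1-p))

/-- `w` is an `A_p` weight within `B₀`. -/
def ApWithin (p : ℝ) (w : ℝ → ℝ) (B₀ : Set ℝ) : Prop :=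
  ∃ C > (0:ℝ), ∀ x r : ℝ, 0 < r → Ioo (x - r) (x + r) ⊆ B₀ →
    ApOn p w (Ioo (x - r) (x + r)) C

/-- `w` is a local `A_p` weight. -/
def LocalAp (p : ℝ) (w : ℝ → ℝ) : Prop :=
  ∀ x : ℝ, ∃ R > (0:ℝ), ApWithin p w (Ioo (x - R) (x + R))

/-- `w` is a global `A_p` weight. -/
def GlobalAp (p : ℝ) (w : ℝ → ℝ) : Prop :=
  ∃ C > (0:ℝ), ∀ x r : ℝ, 0 < r → ApOn p w (Ioo (x - r) (x + r)) C

end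

section Aux

/-- Chain/recentering doubling estimate. -/
lemma chain_doubling {μ : Measure ℝ} {Cd : ℝ≥0∞} {B₀ : Set ℝ}
    (hD : DoublingWithinC μ Cd B₀) :
    ∀ n : ℕ, ∀ z ρ y s : ℝ, 0 < s → Ioo (y - s) (y + s) ⊆ Ioo (z - ρ) (z + ρ) →
      Ioo (z - ρ) (z + ρ) ⊆ B₀ → ρ ≤ (3/2)^n * s →
      μ (Ioo (z - ρ) (z + ρ)) ≤ Cd^n * μ (Ioo (y - s) (y + s)) := by
  intro n
  induction n with
  | zero =>
    intro z ρ y s hs hsub hB hρ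
    simp only [pow_zero, one_mul] at hρ ⊢
    have h := (Ioo_subset_Ioo_iff (by linarith : y - s < y + s)).1 hsub
    have hy : y = z := by linarith [h.1, h.2]
    have hsρ : s = ρ := by linarith [h.1, h.2]
    subst hy; subst hsρ; exact le_refl _
  | succ n ih =>
    intro z ρ y s hs hsub hB hρn
    have h := (Ioo_subset_Ioo_iff (by linarith : y - s < y + s)).1 hsub
    have hsρ : s ≤ ρ := by linarith [h.1, h.2]
    set s' := min ((3/2)*s) ρ with hs'def
    have hs'1 : s ≤ s' := le_min (by linarith) hsρ
    have hs'2 : s' ≤ (3/2)*s := min_le_left _ _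
    have hs'3 : s' ≤ ρ := min_le_right _ _
    have hs'pos : 0 < s' := lt_of_lt_of_le hs hs'1
    set y' := max (z - (ρ - s')) (min y (z + (ρ - s'))) with hy'def
    have hmarg : z - (ρ - s') ≤ z + (ρ - s') := by linarith
    have hy'1 : z - (ρ - s') ≤ y' := le_max_left _ _
    have hy'2 : y' ≤ z + (ρ - s') := max_le (by linarith) (min_le_right _ _)
    -- |y' - y| ≤ s' - s
    have hyy' : |y' - y| ≤ s' - s := by
      have hya : z - (ρ - s) ≤ y := by linarith [h.1]
      have hyb : y ≤ z + (ρ - s) := by linarith [h.2]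
      rcases le_total y (z - (ρ - s')) with hc1 | hc1
      · have hmin : min y (z + (ρ - s')) = y := min_eq_left (by linarith)
        have : y' = z - (ρ - s') := by rw [hy'def, hmin]; exact max_eq_left hc1
        rw [this, abs_le]; constructor <;> linarith
      · rcases le_total y (z + (ρ - s')) with hc2 | hc2
        · have hmin : min y (z + (ρ - s')) = y := min_eq_left hc2
          have : y' = y := by rw [hy'def, hmin]; exact max_eq_right hc1
          rw [this]; simp; linarith
        · have hmin : min y (z + (ρ - s')) = z + (ρ - s') := min_eq_right hc2
          have : y' = z + (ρ - s') := by rw [hy'def, hmin]; exact max_eq_right (by linarith)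
          rw [this, abs_le]; constructor <;> linarith
    have habs := abs_le.1 hyy'
    -- inclusion of new ball in old big ball
    have hsub' : Ioo (y' - s') (y' + s') ⊆ Ioo (z - ρ) (z + ρ) :=
      Ioo_subset_Ioo (by linarith) (by linarith)
    -- ρ ≤ (3/2)^n * s'
    have hρ' : ρ ≤ (3/2)^n * s' := by
      rcases le_or_gt ((3/2)*s) ρ with hcase | hcase
      · have : s' = (3/2)*s := min_eq_left hcase
        rw [this]; calc ρ ≤ (3/2)^(n+1) * s := hρn
          _ = (3/2)^n * ((3/2)*s) := by ring
      · have : s' = ρ := min_eq_right hcase.le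
        rw [this]
        have h1 : (1:ℝ) ≤ (3/2)^n := one_le_pow₀ (by norm_num)
        nlinarith [h1, lt_of_lt_of_le hs hsρ]
    -- doubling step: Ioo(y' ± s') ⊆ Ioo(y ± 2s)
    have hstep : Ioo (y' - s') (y' + s') ⊆ Ioo (y - 2*s) (y + 2*s) :=
      Ioo_subset_Ioo (by linarith) (by linarith)
    have hdb : μ (Ioo (y' - s') (y' + s')) ≤ Cd * μ (Ioo (y - s) (y + s)) :=
      le_trans (measure_mono hstep) (hD y s hs (hsub.trans hB))
    calc μ (Ioo (z - ρ) (z + ρ)) ≤ Cd^n * μ (Ioo (y' - s') (y' + s')) :=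
          ih z ρ y' s' hs'pos hsub' hB hρ'
      _ ≤ Cd^n * (Cd * μ (Ioo (y - s) (y + s))) := mul_le_mul_right hdb _
      _ = Cd^(n+1) * μ (Ioo (y - s) (y + s)) := by ring

section Key

variable {μ : Measure ℝ} {p CPI lam : ℝ} {Cd : ℝ≥0∞} {B₀ : Set ℝ}

/-- The key estimate extracted from the Lipschitz Poincaré inequality, applied to
primitives of upper semicontinuous `ℝ≥0`-valued functions. -/
lemma key_estimate
    (hp : 1 ≤ p) (hlam : 1 ≤ lam)
    (hμ : IsMeasureOnR μ)
    (hD : DoublingWithinC μ Cd B₀) (hPI : LipPoincareWithinC μ p CPI lam B₀)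
    {τ : ℝ} (hτ0 : 0 < τ) (hτ1 : τ < 1) (N : ℕ)
    (hN : 2 ≤ (3/2:ℝ)^N * (1 - τ))
    (z ρ : ℝ) (hρ : 0 < ρ) (hsub : Ioo (z - ρ) (z + ρ) ⊆ B₀)
    (k : ℝ → ℝ≥0) (M : ℝ≥0) (hkM : ∀ x, k x ≤ M)
    (hUSC : UpperSemicontinuous k) :
    ∫⁻ t in Ioo (z - τ*ρ) (z + τ*ρ), (k t : ℝ≥0∞) ≤
      Cd^N * ENNReal.ofReal (CPI * ρ) *
        ((∫⁻ t in Ioo (z - lam*ρ) (z + lam*ρ), ((k t : ℝ≥0∞))^p ∂μ) /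
          μ (Ioo (z - lam*ρ) (z + lam*ρ)))^(1/p) := by
  have hkmeas : Measurable k := hUSC.measurable
  have hkmeas' : Measurable (fun t => (k t : ℝ≥0∞)) := hkmeas.coe_nnreal_ennreal
  set a₀ : ℝ := z - lam*ρ - 1 with ha₀
  set u : ℝ → ℝ := fun t => (∫⁻ s in Ioo a₀ t, (k s : ℝ≥0∞)).toReal with hu
  -- finiteness
  have hfin : ∀ x y : ℝ, (∫⁻ s in Ico x y, (k s : ℝ≥0∞)) ≤ (M : ℝ≥0∞) * ENNReal.ofReal (y - x) := by
    intro x y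
    calc (∫⁻ s in Ico x y, (k s : ℝ≥0∞))
        ≤ ∫⁻ _ in Ico x y, (M : ℝ≥0∞) :=
          lintegral_mono fun s => ENNReal.coe_le_coe.2 (hkM s)
      _ = (M : ℝ≥0∞) * volume (Ico x y) := setLIntegral_const _ _
      _ = (M : ℝ≥0∞) * ENNReal.ofReal (y - x) := by rw [Real.volume_Ico]
  have hfin' : ∀ x y : ℝ, (∫⁻ s in Ioo x y, (k s : ℝ≥0∞)) ≤ (M : ℝ≥0∞) * ENNReal.ofReal (y - x) :=
    fun x y => le_trans (lintegral_mono_set Ioo_subset_Ico_self) (hfin x y)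
  have hne : ∀ t : ℝ, (∫⁻ s in Ioo a₀ t, (k s : ℝ≥0∞)) ≠ ⊤ :=
    fun t => ne_top_of_le_ne_top (by finiteness) (hfin' a₀ t)
  have hne2 : ∀ x y : ℝ, (∫⁻ s in Ico x y, (k s : ℝ≥0∞)) ≠ ⊤ :=
    fun x y => ne_top_of_le_ne_top (by finiteness) (hfin x y)
  -- increment identity
  have hincr_eq : ∀ x y : ℝ, a₀ < x → x ≤ y →
      (∫⁻ s in Ioo a₀ y, (k s : ℝ≥0∞)) =
        (∫⁻ s in Ioo a₀ x, (k s : ℝ≥0∞)) + (∫⁻ s in Ico x y, (k s : ℝ≥0∞)) := by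
    intro x y hx hxy
    rw [← lintegral_union measurableSet_Ico
      (Set.disjoint_left.2 fun t ht ht' => absurd ht'.1 (not_le.2 ht.2)),
      Ioo_union_Ico_eq_Ioo hx hxy]
  have humono : Monotone u := fun x y hxy =>
    ENNReal.toReal_mono (hne y) (lintegral_mono_set (Ioo_subset_Ioo_right hxy))
  have hofReal_incr : ∀ x y : ℝ, a₀ < x → x ≤ y →
      ENNReal.ofReal (u y - u x) = ∫⁻ s in Ico x y, (k s : ℝ≥0∞) := by
    intro x y hx hxy
    have h1 := hincr_eq x y hx hxy
    have : u y - u x = ((∫⁻ s in Ico x y, (k s : ℝ≥0∞))).toReal := by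
      simp only [hu, h1, ENNReal.toReal_add (hne x) (hne2 x y)]; ring
    rw [this, ENNReal.ofReal_toReal (hne2 x y)]
  have hincr_le : ∀ x y : ℝ, x ≤ y →
      ENNReal.ofReal (u y - u x) ≤ ∫⁻ s in Ico x y, (k s : ℝ≥0∞) := by
    intro x y hxy
    rcases lt_or_ge a₀ x with hx | hx
    · exact le_of_eq (hofReal_incr x y hx hxy)
    · have hux : u x = 0 := by
        simp only [hu, Ioo_eq_empty (not_lt.2 hx), Measure.restrict_empty, lintegral_zero_measure,
          ENNReal.toReal_zero]
      have hsub2 : Ioo a₀ y ⊆ Ico x y := fun s hs => ⟨le_trans hx hs.1.le, hs.2⟩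
      calc ENNReal.ofReal (u y - u x) = ENNReal.ofReal (u y) := by rw [hux, sub_zero]
        _ = ∫⁻ s in Ioo a₀ y, (k s : ℝ≥0∞) := ENNReal.ofReal_toReal (hne y)
        _ ≤ _ := lintegral_mono_set hsub2
  -- bound on intervals where k is small
  have hbound : ∀ (x y : ℝ) (c : ℝ≥0), (∀ s ∈ Ico x y, k s ≤ c) →
      (∫⁻ s in Ico x y, (k s : ℝ≥0∞)) ≤ (c : ℝ≥0∞) * ENNReal.ofReal (y - x) := by
    intro x y c hc
    calc (∫⁻ s in Ico x y, (k s : ℝ≥0∞))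
        ≤ ∫⁻ _ in Ico x y, (c : ℝ≥0∞) :=
          setLIntegral_mono measurable_const fun s hs => ENNReal.coe_le_coe.2 (hc s hs)
      _ = (c : ℝ≥0∞) * volume (Ico x y) := setLIntegral_const _ _
      _ = (c : ℝ≥0∞) * ENNReal.ofReal (y - x) := by rw [Real.volume_Ico]
  -- real increments
  have hreal_incr : ∀ (x y : ℝ) (c : ℝ≥0), x ≤ y → (∀ s ∈ Ico x y, k s ≤ c) →
      u y - u x ≤ (c : ℝ) * (y - x) := by
    intro x y c hxy hc
    have h1 : ENNReal.ofReal (u y - u x) ≤ ENNReal.ofReal ((c:ℝ) * (y - x)) := by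
      refine le_trans (hincr_le x y hxy) (le_trans (hbound x y c hc) ?_)
      rw [ENNReal.ofReal_mul c.coe_nonneg]
      simp [ENNReal.ofReal_coe_nnreal]
    have hcn : (0:ℝ) ≤ (c:ℝ) * (y - x) := mul_nonneg c.coe_nonneg (sub_nonneg.2 hxy)
    rcases le_total (u y - u x) 0 with h | h
    · exact le_trans h hcn
    · exact (ENNReal.ofReal_le_ofReal_iff hcn).1 h1
  have hulip : LipschitzWith M u := by
    rw [lipschitzWith_iff_dist_le_mul]
    intro x y
    rcases le_total x y with hxy | hxy
    · rw [Real.dist_eq, Real.dist_eq, abs_sub_comm, abs_of_nonneg (sub_nonneg.2 (humono hxy)),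
        abs_of_nonpos (sub_nonpos.2 hxy), neg_sub]
      exact hreal_incr x y M hxy fun s _ => hkM s
    · rw [Real.dist_eq, Real.dist_eq, abs_of_nonneg (sub_nonneg.2 (humono hxy)),
        abs_of_nonneg (sub_nonneg.2 hxy)]
      exact hreal_incr y x M hxy fun s _ => hkM s
  set lB : Set ℝ := Ioo (z - lam*ρ) (z + lam*ρ) with hlB
  -- pointwise bound on the upper Lipschitz constant
  have heLip : ∀ x : ℝ, eLipWithin u lB x ≤ (k x : ℝ≥0∞) := by
    intro x
    rcases le_or_gt x a₀ with hx | hx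
    · -- `x` is far from `lB`: the limsup is over the bot filter
      have hcl : x ∉ closure (lB \ {x}) := by
        intro hmem
        have h1 : closure (lB \ {x}) ⊆ Icc (z - lam*ρ) (z + lam*ρ) := by
          refine closure_minimal ?_ isClosed_Icc
          exact fun s hs => Ioo_subset_Icc_self hs.1
        have h2 := (h1 hmem).1
        have : (0:ℝ) < lam * ρ := by positivity
        simp only [ha₀] at hx
        linarith
      have hbot : 𝓝[lB \ {x}] x = ⊥ := by
        by_contra hne'
        exact hcl (mem_closure_iff_nhdsWithin_neBot.2 ⟨hne'⟩)
      simp only [eLipWithin, hbot, limsup_bot]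
      exact zero_le
    · refine ENNReal.le_of_forall_pos_le_add fun ε hε _ => ?_
      have hlt : k x < k x + ε := lt_add_of_pos_right _ hε
      have hev := hUSC x _ hlt
      rw [Metric.eventually_nhds_iff] at hev
      obtain ⟨δ, hδ0, hδ⟩ := hev
      have hevs : ∀ᶠ y in 𝓝[lB \ {x}] x, dist y x < δ :=
        eventually_nhdsWithin_of_eventually_nhds
          (Metric.eventually_nhds_iff.2 ⟨δ, hδ0, fun {y} hy => hy⟩)
      have hevmem : ∀ᶠ y in 𝓝[lB \ {x}] x, y ∈ lB \ {x} := eventually_mem_nhdsWithin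
      have hco : (↑(k x) : ℝ≥0∞) + ↑ε = ((k x + ε : ℝ≥0) : ℝ≥0∞) := by
        rw [ENNReal.coe_add]
      rw [eLipWithin, hco]
      refine limsup_le_of_le (by isBoundedDefault) ?_
      filter_upwards [hevs, hevmem] with y hy hymem
      have hyx : y ≠ x := hymem.2
      have habs : |u y - u x| ≤ ((k x + ε : ℝ≥0) : ℝ) * |y - x| := by
        rcases le_total x y with hxy | hxy
        · rw [abs_of_nonneg (sub_nonneg.2 (humono hxy)), abs_of_nonneg (sub_nonneg.2 hxy)]
          refine hreal_incr x y _ hxy fun s hs => (hδ ?_).le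
          rw [Real.dist_eq, abs_of_nonneg (sub_nonneg.2 hs.1)]
          calc s - x < y - x := sub_lt_sub_right (lt_of_lt_of_le hs.2 le_rfl) x
            _ ≤ |y - x| := le_abs_self _
            _ = dist y x := (Real.dist_eq y x).symm
            _ < δ := hy
        · rw [abs_sub_comm, abs_of_nonneg (sub_nonneg.2 (humono hxy)), abs_sub_comm,
            abs_of_nonneg (sub_nonneg.2 hxy)]
          refine hreal_incr y x _ hxy fun s hs => (hδ ?_).le
          rw [Real.dist_eq, abs_of_nonpos (sub_nonpos.2 hs.2.le), neg_sub]
          calc x - s ≤ x - y := sub_le_sub_left hs.1 x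
            _ ≤ |y - x| := by rw [abs_sub_comm]; exact le_abs_self _
            _ = dist y x := (Real.dist_eq y x).symm
            _ < δ := hy
      have hpos : (0:ℝ) < |y - x| := abs_pos.2 (sub_ne_zero.2 hyx)
      have : |u y - u x| / |y - x| ≤ ((k x + ε : ℝ≥0) : ℝ) := by
        rw [div_le_iff₀ hpos]; exact habs
      calc ENNReal.ofReal (|u y - u x| / |y - x|) ≤ ENNReal.ofReal ((k x + ε : ℝ≥0) : ℝ) :=
            ENNReal.ofReal_le_ofReal this
        _ = ((k x + ε : ℝ≥0) : ℝ≥0∞) := ENNReal.ofReal_coe_nnreal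
  -- now the main chain
  set Bset : Set ℝ := Ioo (z - ρ) (z + ρ) with hBset
  have hμB0 : μ Bset ≠ 0 := (hμ _ _ (by linarith)).1.ne'
  have hμBt : μ Bset ≠ ⊤ := (hμ _ _ (by linarith)).2.ne
  have hPIa := hPI z ρ hρ hsub u M (hulip.lipschitzOnWith)
  set m : ℝ := ⨍ s in Bset, u s ∂μ with hm
  set D : ℝ := u (z + τ*ρ) with hD'
  set A : ℝ := u (z - τ*ρ) with hA'
  set Sp : Set ℝ := Ioo (z + τ*ρ) (z + ρ) with hSp
  set Sm : Set ℝ := Ioo (z - ρ) (z - τ*ρ) with hSm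
  have hτρ : 0 < τ*ρ := by positivity
  -- chain doubling for the two slivers
  have hchainp : μ Bset ≤ Cd^N * μ Sp := by
    have hset : Sp = Ioo ((z+(1+τ)/2*ρ) - ((1-τ)/2*ρ)) ((z+(1+τ)/2*ρ) + ((1-τ)/2*ρ)) := by
      rw [hSp]; congr 1 <;> ring
    rw [hset]
    refine chain_doubling hD N z ρ _ _ (by nlinarith) ?_ hsub (by nlinarith)
    rw [← hset, hSp]
    exact Ioo_subset_Ioo (by nlinarith) le_rfl
  have hchainm : μ Bset ≤ Cd^N * μ Sm := by
    have hset : Sm = Ioo ((z-(1+τ)/2*ρ) - ((1-τ)/2*ρ)) ((z-(1+τ)/2*ρ) + ((1-τ)/2*ρ)) := by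
      rw [hSm]; congr 1 <;> ring
    rw [hset]
    refine chain_doubling hD N z ρ _ _ (by nlinarith) ?_ hsub (by nlinarith)
    rw [← hset, hSm]
    exact Ioo_subset_Ioo le_rfl (by nlinarith)
  have humeas : Measurable fun t => ENNReal.ofReal (|u t - m|) :=
    ((hulip.continuous.measurable.sub measurable_const).abs).ennreal_ofReal
  have hIp : ENNReal.ofReal (D - m) * μ Sp ≤ ∫⁻ t in Sp, ENNReal.ofReal |u t - m| ∂μ := by
    calc ENNReal.ofReal (D - m) * μ Sp = ∫⁻ _ in Sp, ENNReal.ofReal (D - m) ∂μ :=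
          (setLIntegral_const _ _).symm
      _ ≤ _ := by
          refine setLIntegral_mono humeas fun t ht => ENNReal.ofReal_le_ofReal ?_
          have h1 : D ≤ u t := humono (le_of_lt ht.1)
          calc D - m ≤ u t - m := by linarith
            _ ≤ |u t - m| := le_abs_self _
  have hIm : ENNReal.ofReal (m - A) * μ Sm ≤ ∫⁻ t in Sm, ENNReal.ofReal |u t - m| ∂μ := by
    calc ENNReal.ofReal (m - A) * μ Sm = ∫⁻ _ in Sm, ENNReal.ofReal (m - A) ∂μ :=
          (setLIntegral_const _ _).symm
      _ ≤ _ := by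
          refine setLIntegral_mono humeas fun t ht => ENNReal.ofReal_le_ofReal ?_
          have h1 : u t ≤ A := humono (le_of_lt ht.2)
          calc m - A ≤ m - u t := by linarith
            _ ≤ |u t - m| := by rw [abs_sub_comm]; exact le_abs_self _
  have hparts : (∫⁻ t in Sm, ENNReal.ofReal |u t - m| ∂μ) +
      (∫⁻ t in Sp, ENNReal.ofReal |u t - m| ∂μ) ≤ ∫⁻ t in Bset, ENNReal.ofReal |u t - m| ∂μ := by
    rw [← lintegral_union measurableSet_Ioo
      (Set.disjoint_left.2 fun t ht ht' => absurd (lt_trans ht.2 (by linarith)) (not_lt.2 ht'.1.le))]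
    refine lintegral_mono_set (union_subset ?_ ?_)
    · exact Ioo_subset_Ioo le_rfl (by linarith)
    · exact Ioo_subset_Ioo (by linarith) le_rfl
  have hDA : ENNReal.ofReal (D - A) * μ Bset ≤
      Cd^N * ∫⁻ t in Bset, ENNReal.ofReal |u t - m| ∂μ := by
    have h1 : ENNReal.ofReal (D - A) ≤ ENNReal.ofReal (D - m) + ENNReal.ofReal (m - A) := by
      have he : D - A = (D - m) + (m - A) := by ring
      rw [he]; exact ENNReal.ofReal_add_le
    calc ENNReal.ofReal (D - A) * μ Bset
        ≤ (ENNReal.ofReal (D - m) + ENNReal.ofReal (m - A)) * μ Bset := mul_le_mul_left h1 _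
      _ = ENNReal.ofReal (D - m) * μ Bset + ENNReal.ofReal (m - A) * μ Bset := by rw [add_mul]
      _ ≤ ENNReal.ofReal (D - m) * (Cd^N * μ Sp) + ENNReal.ofReal (m - A) * (Cd^N * μ Sm) :=
          add_le_add (mul_le_mul_right hchainp _) (mul_le_mul_right hchainm _)
      _ = Cd^N * (ENNReal.ofReal (D - m) * μ Sp + ENNReal.ofReal (m - A) * μ Sm) := by ring
      _ ≤ Cd^N * ((∫⁻ t in Sp, ENNReal.ofReal |u t - m| ∂μ) +
            (∫⁻ t in Sm, ENNReal.ofReal |u t - m| ∂μ)) :=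
          mul_le_mul_right (add_le_add hIp hIm) _
      _ ≤ Cd^N * ∫⁻ t in Bset, ENNReal.ofReal |u t - m| ∂μ := by
          rw [add_comm (∫⁻ t in Sp, ENNReal.ofReal |u t - m| ∂μ)]
          exact mul_le_mul_right hparts _
  have hPoinLHS : PoinLHS μ u Bset = (∫⁻ t in Bset, ENNReal.ofReal |u t - m| ∂μ) / μ Bset := rfl
  have hkey2 : ENNReal.ofReal (D - A) ≤ Cd^N * PoinLHS μ u Bset := by
    rw [hPoinLHS, ← mul_div_assoc]
    exact (ENNReal.le_div_iff_mul_le (Or.inl hμB0) (Or.inl hμBt)).2 hDA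
  have hkey3 : ENNReal.ofReal (D - A) ≤ Cd^N * (ENNReal.ofReal (CPI * ρ) *
      PoinRHS μ (eLipWithin u lB) p lB) := le_trans hkey2 (mul_le_mul_right hPIa _)
  have hRHSmono : PoinRHS μ (eLipWithin u lB) p lB ≤
      PoinRHS μ (fun t => (k t : ℝ≥0∞)) p lB := by
    refine ENNReal.rpow_le_rpow ?_ (by positivity)
    refine ENNReal.div_le_div_right (lintegral_mono fun t => ?_) _
    exact ENNReal.rpow_le_rpow (heLip t) (by linarith)
  have hfinal0 : (∫⁻ t in Ioo (z - τ*ρ) (z + τ*ρ), (k t : ℝ≥0∞)) ≤ ENNReal.ofReal (D - A) := by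
    rw [hofReal_incr (z - τ*ρ) (z + τ*ρ) (by simp only [ha₀]; nlinarith) (by nlinarith)]
    exact lintegral_mono_set Ioo_subset_Ico_self
  calc (∫⁻ t in Ioo (z - τ*ρ) (z + τ*ρ), (k t : ℝ≥0∞)) ≤ ENNReal.ofReal (D - A) := hfinal0
    _ ≤ Cd^N * (ENNReal.ofReal (CPI * ρ) * PoinRHS μ (eLipWithin u lB) p lB) := hkey3
    _ ≤ Cd^N * (ENNReal.ofReal (CPI * ρ) * PoinRHS μ (fun t => (k t : ℝ≥0∞)) p lB) :=
        mul_le_mul_right (mul_le_mul_right hRHSmono _) _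
    _ = Cd^N * ENNReal.ofReal (CPI * ρ) *
        ((∫⁻ t in lB, ((k t : ℝ≥0∞))^p ∂μ) / μ lB)^(1/p) := by
        rw [← mul_assoc]; rfl

end Key

/-- An open preconnected bounded nonempty subset of `ℝ` is an open interval. -/
lemma open_preconnected_eq_Ioo {c : Set ℝ} (hco : IsOpen c) (hcc : IsPreconnected c)
    (hne : c.Nonempty) (hbdd : BddBelow c) (hbda : BddAbove c) :
    c = Ioo (sInf c) (sSup c) := by
  apply Subset.antisymm
  · intro x hx
    rcases Metric.isOpen_iff.1 hco x hx with ⟨ε, hε0, hball⟩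
    constructor
    · have hx' : x - ε/2 ∈ c := hball (by
        rw [Metric.mem_ball, Real.dist_eq]
        rw [abs_of_nonpos (by linarith)]; linarith)
      have := csInf_le hbdd hx'
      linarith
    · have hx' : x + ε/2 ∈ c := hball (by
        rw [Metric.mem_ball, Real.dist_eq]
        rw [abs_of_nonneg (by linarith)]; linarith)
      have := le_csSup hbda hx'
      linarith
  · intro x hx
    obtain ⟨u', huc, hu⟩ := exists_lt_of_csInf_lt hne hx.1
    obtain ⟨v, hvc, hv⟩ := exists_lt_of_lt_csSup hne hx.2
    exact hcc.ordConnected.out huc hvc ⟨hu.le, hv.le⟩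

section Main

variable {μ : Measure ℝ} {p CPI lam : ℝ} {Cd : ℝ≥0∞} {B₀ : Set ℝ}

/-- In any ball inside `B₀`, a compact Lebesgue-null set occupies at most a definite
fraction of the `μ`-measure. -/
lemma compact_null_in_ball
    (hp : 1 ≤ p) (hlam : 1 ≤ lam) (hCPI : 0 < CPI)
    (hμ : IsMeasureOnR μ) (hCd0 : 0 < Cd) (hCdt : Cd < ⊤)
    (hD : DoublingWithinC μ Cd B₀) (hPI : LipPoincareWithinC μ p CPI lam B₀)
    {τ : ℝ} (hτ0 : 0 < τ) (hτ1 : τ < 1) (N : ℕ) (hN : 2 ≤ (3/2:ℝ)^N * (1-τ))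
    (a b : ℝ) (hab : a < b) (hJ : Ioo a b ⊆ B₀)
    (K : Set ℝ) (hK : IsCompact K) (hKJ : K ⊆ Ioo a b) (hK0 : volume K = 0) :
    μ K + (ENNReal.ofReal (2*τ))^p / (Cd^N * ENNReal.ofReal CPI)^p * μ (Ioo a b)
      ≤ μ (Ioo a b) := by
  have hlam0 : (0:ℝ) < lam := by linarith
  set z : ℝ := (a+b)/2 with hz
  set ρ : ℝ := (b-a)/(2*lam) with hρdef
  have hρ : 0 < ρ := by
    rw [hρdef]
    exact div_pos (by linarith) (by linarith)
  have hρhalf : ρ ≤ (b-a)/2 := by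
    rw [hρdef]
    exact div_le_div_of_nonneg_left (by linarith) (by linarith) (by linarith)
  have hBsub : Ioo (z - ρ) (z + ρ) ⊆ Ioo a b :=
    Ioo_subset_Ioo (by rw [hz]; linarith) (by rw [hz]; linarith)
  have hlamB : Ioo (z - lam*ρ) (z + lam*ρ) = Ioo a b := by
    have h1 : lam * ρ = (b-a)/2 := by
      rw [hρdef]; field_simp
    rw [h1]
    have e1 : z - (b-a)/2 = a := by rw [hz]; ring
    have e2 : z + (b-a)/2 = b := by rw [hz]; ring
    rw [e1, e2]
  set X : ℝ≥0∞ := μ (Ioo a b) with hX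
  have hX0 : X ≠ 0 := (hμ a b hab).1.ne'
  have hXt : X ≠ ⊤ := (hμ a b hab).2.ne
  have hKX : μ K ≤ X := measure_mono hKJ
  set Q : ℝ≥0∞ := ((X - μ K)/X)^(1/p) with hQ
  have hp0 : (0:ℝ) < p := by linarith
  have hQt : Q ≠ ⊤ := by
    refine ENNReal.rpow_ne_top_of_nonneg (one_div_nonneg.2 hp0.le) ?_
    exact (ENNReal.div_lt_top (ne_top_of_le_ne_top hXt tsub_le_self) hX0).ne
  set C4 : ℝ≥0∞ := Cd^N * ENNReal.ofReal (CPI * ρ) with hC4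
  have hC4t : C4 ≠ ⊤ := ENNReal.mul_ne_top (ENNReal.pow_ne_top hCdt.ne) ENNReal.ofReal_ne_top
  -- main inequality with the error η
  have hmain : ENNReal.ofReal (2*(τ*ρ)) ≤ C4 * Q := by
    refine ENNReal.le_of_forall_pos_le_add fun ε hε htop => ?_
    have hε' : (0:ℝ≥0∞) < ε := ENNReal.coe_pos.2 hε
    obtain ⟨V, hKV, hVopen, hVsmall⟩ :=
      Set.exists_isOpen_lt_of_lt K (ε : ℝ≥0∞) (hK0 ▸ hε')
    set F : Set ℝ := Icc (z - τ*ρ) (z + τ*ρ) \ V with hF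
    have hFclosed : IsClosed F := isClosed_Icc.sdiff hVopen
    set k : ℝ → ℝ≥0 := F.indicator (fun _ => (1:ℝ≥0)) with hk
    have hkcoe : (fun t => (k t : ℝ≥0∞)) = F.indicator (fun _ => (1:ℝ≥0∞)) := by
      funext t; by_cases ht : t ∈ F <;> simp [hk, ht]
    have hkcoep : (fun t => ((k t : ℝ≥0∞))^p) = F.indicator (fun _ => (1:ℝ≥0∞)) := by
      funext t; by_cases ht : t ∈ F <;>
        simp [hk, ht, ENNReal.one_rpow, ENNReal.zero_rpow_of_pos hp0]
    have hkM : ∀ x, k x ≤ 1 := fun x => by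
      by_cases hx : x ∈ F <;> simp [hk, hx]
    have hUSC : UpperSemicontinuous k := hFclosed.upperSemicontinuous_indicator zero_le_one
    have hkey := key_estimate hp hlam hμ hD hPI hτ0 hτ1 N hN z ρ hρ (hBsub.trans hJ)
      k 1 hkM hUSC
    rw [hlamB] at hkey
    -- evaluate left side
    have hLHS : (∫⁻ t in Ioo (z - τ*ρ) (z + τ*ρ), (k t : ℝ≥0∞)) =
        volume (F ∩ Ioo (z - τ*ρ) (z + τ*ρ)) := by
      rw [hkcoe, lintegral_indicator hFclosed.measurableSet, setLIntegral_one,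
        Measure.restrict_apply hFclosed.measurableSet]
    have hLHS2 : ENNReal.ofReal (2*(τ*ρ)) ≤
        volume (F ∩ Ioo (z - τ*ρ) (z + τ*ρ)) + (ε : ℝ≥0∞) := by
      have hcover : Ioo (z - τ*ρ) (z + τ*ρ) ⊆ (F ∩ Ioo (z - τ*ρ) (z + τ*ρ)) ∪ V := by
        intro t ht
        by_cases htV : t ∈ V
        · exact Or.inr htV
        · exact Or.inl ⟨⟨Ioo_subset_Icc_self ht, htV⟩, ht⟩
      calc ENNReal.ofReal (2*(τ*ρ)) = volume (Ioo (z - τ*ρ) (z + τ*ρ)) := by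
            rw [Real.volume_Ioo]; congr 1; ring
        _ ≤ volume ((F ∩ Ioo (z - τ*ρ) (z + τ*ρ)) ∪ V) := measure_mono hcover
        _ ≤ volume (F ∩ Ioo (z - τ*ρ) (z + τ*ρ)) + volume V := measure_union_le _ _
        _ ≤ _ := add_le_add le_rfl hVsmall.le
    -- evaluate right side
    have hRHS : (∫⁻ t in Ioo a b, ((k t : ℝ≥0∞))^p ∂μ) ≤ X - μ K := by
      have h1 : (∫⁻ t in Ioo a b, ((k t : ℝ≥0∞))^p ∂μ) = μ (F ∩ Ioo a b) := by
        rw [show (fun t => ((k t : ℝ≥0∞))^p) = F.indicator (fun _ => (1:ℝ≥0∞)) from hkcoep,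
          lintegral_indicator hFclosed.measurableSet, setLIntegral_one,
          Measure.restrict_apply hFclosed.measurableSet]
      rw [h1]
      refine ENNReal.le_sub_of_add_le_right (ne_top_of_le_ne_top hXt hKX) ?_
      have hdisj : Disjoint (F ∩ Ioo a b) K :=
        Set.disjoint_left.2 fun t ht htK => ht.1.2 (hKV htK)
      calc μ (F ∩ Ioo a b) + μ K = μ ((F ∩ Ioo a b) ∪ K) :=
            (measure_union hdisj hK.measurableSet).symm
        _ ≤ X := measure_mono (union_subset inter_subset_right hKJ)
    have hQmono : ((∫⁻ t in Ioo a b, ((k t : ℝ≥0∞))^p ∂μ) / X)^(1/p) ≤ Q := by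
      rw [hQ]
      exact ENNReal.rpow_le_rpow (ENNReal.div_le_div_right hRHS _) (by positivity)
    calc ENNReal.ofReal (2*(τ*ρ)) ≤ volume (F ∩ Ioo (z - τ*ρ) (z + τ*ρ)) + (ε:ℝ≥0∞) := hLHS2
      _ = (∫⁻ t in Ioo (z - τ*ρ) (z + τ*ρ), (k t : ℝ≥0∞)) + (ε:ℝ≥0∞) := by rw [hLHS]
      _ ≤ C4 * ((∫⁻ t in Ioo a b, ((k t : ℝ≥0∞))^p ∂μ) / X)^(1/p) + (ε:ℝ≥0∞) :=
          add_le_add hkey le_rfl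
      _ ≤ C4 * Q + (ε:ℝ≥0∞) := add_le_add (mul_le_mul_right hQmono _) le_rfl
  -- raise to the power p and cancel ρ
  have hp_ne : p ≠ 0 := ne_of_gt hp0
  have hraise : (ENNReal.ofReal (2*(τ*ρ)))^p * X ≤ C4^p * (X - μ K) := by
    have h1 : (ENNReal.ofReal (2*(τ*ρ)))^p ≤ C4^p * ((X - μ K)/X) := by
      calc (ENNReal.ofReal (2*(τ*ρ)))^p ≤ (C4 * Q)^p := ENNReal.rpow_le_rpow hmain hp0.le
        _ = C4^p * Q^p := ENNReal.mul_rpow_of_ne_top hC4t hQt p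
        _ = C4^p * ((X - μ K)/X) := by
            rw [hQ, ← ENNReal.rpow_mul, one_div_mul_cancel hp_ne, ENNReal.rpow_one]
    calc (ENNReal.ofReal (2*(τ*ρ)))^p * X ≤ (C4^p * ((X - μ K)/X)) * X :=
          mul_le_mul_left h1 _
      _ = C4^p * (X - μ K) := by
          rw [mul_assoc, ENNReal.div_mul_cancel hX0 hXt]
  have hsplitL : (ENNReal.ofReal (2*(τ*ρ)))^p =
      (ENNReal.ofReal (2*τ))^p * (ENNReal.ofReal ρ)^p := by
    rw [show 2*(τ*ρ) = (2*τ)*ρ by ring, ENNReal.ofReal_mul (by linarith),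
      ENNReal.mul_rpow_of_ne_top ENNReal.ofReal_ne_top ENNReal.ofReal_ne_top]
  have hsplitR : C4^p = (Cd^N * ENNReal.ofReal CPI)^p * (ENNReal.ofReal ρ)^p := by
    rw [hC4, ENNReal.ofReal_mul hCPI.le, ← mul_assoc,
      ENNReal.mul_rpow_of_ne_top (ENNReal.mul_ne_top (ENNReal.pow_ne_top hCdt.ne)
        ENNReal.ofReal_ne_top) ENNReal.ofReal_ne_top]
  have hρp0 : (ENNReal.ofReal ρ)^p ≠ 0 := by
    simp only [ne_eq, ENNReal.rpow_eq_zero_iff]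
    push_neg
    constructor
    · intro h; exact absurd h (by simp [ENNReal.ofReal_eq_zero, not_le, hρ])
    · intro h; exact absurd h ENNReal.ofReal_ne_top
  have hρpt : (ENNReal.ofReal ρ)^p ≠ ⊤ :=
    ENNReal.rpow_ne_top_of_nonneg hp0.le ENNReal.ofReal_ne_top
  have hcancel : (ENNReal.ofReal (2*τ))^p * X ≤ (Cd^N * ENNReal.ofReal CPI)^p * (X - μ K) := by
    rw [hsplitL, hsplitR] at hraise
    have h2 : ((ENNReal.ofReal (2*τ))^p * X) * (ENNReal.ofReal ρ)^p ≤
        ((Cd^N * ENNReal.ofReal CPI)^p * (X - μ K)) * (ENNReal.ofReal ρ)^p := by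
      calc ((ENNReal.ofReal (2*τ))^p * X) * (ENNReal.ofReal ρ)^p
          = (ENNReal.ofReal (2*τ))^p * (ENNReal.ofReal ρ)^p * X := by ring
        _ ≤ (Cd^N * ENNReal.ofReal CPI)^p * (ENNReal.ofReal ρ)^p * (X - μ K) := hraise
        _ = ((Cd^N * ENNReal.ofReal CPI)^p * (X - μ K)) * (ENNReal.ofReal ρ)^p := by ring
    exact (ENNReal.mul_le_mul_iff_left hρp0 hρpt).1 h2
  -- conclude
  set A2 : ℝ≥0∞ := (Cd^N * ENNReal.ofReal CPI)^p with hA2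
  have hA20 : A2 ≠ 0 := by
    simp only [hA2, ne_eq, ENNReal.rpow_eq_zero_iff]
    push_neg
    constructor
    · intro h
      rcases mul_eq_zero.1 h with h' | h'
      · exact absurd h' (pow_ne_zero _ hCd0.ne')
      · rw [ENNReal.ofReal_eq_zero] at h'; linarith
    · intro h; exact absurd h (ENNReal.mul_ne_top (ENNReal.pow_ne_top hCdt.ne)
        ENNReal.ofReal_ne_top)
  have hA2t : A2 ≠ ⊤ := ENNReal.rpow_ne_top_of_nonneg hp0.le
    (ENNReal.mul_ne_top (ENNReal.pow_ne_top hCdt.ne) ENNReal.ofReal_ne_top)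
  have hβ : (ENNReal.ofReal (2*τ))^p / A2 * X ≤ X - μ K := by
    have h3 : (ENNReal.ofReal (2*τ))^p / A2 * X = ((ENNReal.ofReal (2*τ))^p * X) / A2 := by
      rw [div_eq_mul_inv, div_eq_mul_inv, mul_right_comm]
    rw [h3]
    refine (ENNReal.div_le_iff_le_mul (Or.inl hA20) (Or.inl hA2t)).2 ?_
    calc (ENNReal.ofReal (2*τ))^p * X ≤ A2 * (X - μ K) := hcancel
      _ = (X - μ K) * A2 := mul_comm _ _
  calc μ K + (ENNReal.ofReal (2*τ))^p / (Cd^N * ENNReal.ofReal CPI)^p * μ (Ioo a b)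
      ≤ μ K + (X - μ K) := add_le_add le_rfl hβ
    _ = X := add_tsub_cancel_of_le hKX


/-- Every compact Lebesgue-null subset of `B₀` is `μ`-null. -/
lemma compact_null_zero
    (hp : 1 ≤ p) (hlam : 1 ≤ lam) (hCPI : 0 < CPI)
    (hμ : IsMeasureOnR μ) (hCd0 : 0 < Cd) (hCdt : Cd < ⊤)
    {x₀ R : ℝ} (hR : 0 < R)
    (hD : DoublingWithinC μ Cd (Ioo (x₀ - R) (x₀ + R)))
    (hPI : LipPoincareWithinC μ p CPI lam (Ioo (x₀ - R) (x₀ + R)))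
    {τ : ℝ} (hτ0 : 0 < τ) (hτ1 : τ < 1) (N : ℕ) (hN : 2 ≤ (3/2:ℝ)^N * (1-τ))
    (K : Set ℝ) (hK : IsCompact K) (hKB : K ⊆ Ioo (x₀ - R) (x₀ + R))
    (hK0 : volume K = 0) :
    μ K = 0 := by
  classical
  haveI : IsLocallyFiniteMeasure μ :=
    ⟨fun x => ⟨Ioo (x-1) (x+1), Ioo_mem_nhds (by linarith) (by linarith),
      (hμ _ _ (by linarith)).2⟩⟩
  set B₀' : Set ℝ := Ioo (x₀ - R) (x₀ + R) with hB₀'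
  set β : ℝ≥0∞ := (ENNReal.ofReal (2*τ))^p / (Cd^N * ENNReal.ofReal CPI)^p with hβ
  have hp0 : (0:ℝ) < p := by linarith
  have hβ0 : β ≠ 0 := by
    refine (ENNReal.div_pos ?_ ?_).ne'
    · simp only [ne_eq, ENNReal.rpow_eq_zero_iff]
      push_neg
      constructor
      · intro h; rw [ENNReal.ofReal_eq_zero] at h; linarith
      · intro h; exact absurd h ENNReal.ofReal_ne_top
    · exact ENNReal.rpow_ne_top_of_nonneg hp0.le
        (ENNReal.mul_ne_top (ENNReal.pow_ne_top hCdt.ne) ENNReal.ofReal_ne_top)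
  have hμK : μ K ≠ ⊤ := (measure_mono hKB).trans_lt (hμ _ _ (by linarith)).2 |>.ne
  have hkey : β * μ K ≤ 0 := by
    refine ENNReal.le_of_forall_pos_le_add fun ε hε _ => ?_
    rw [zero_add]
    have hε' : (ε : ℝ≥0∞) ≠ 0 := ENNReal.coe_ne_zero.2 hε.ne'
    obtain ⟨U', hKU', hU'open, hU'lt⟩ :=
      Set.exists_isOpen_lt_of_lt K (μ K + ε) (ENNReal.lt_add_right hμK hε')
    set U : Set ℝ := U' ∩ B₀' with hU
    have hUopen : IsOpen U := hU'open.inter isOpen_Ioo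
    have hKU : K ⊆ U := fun x hx => ⟨hKU' hx, hKB hx⟩
    have hUlt : μ U < μ K + ε := lt_of_le_of_lt (measure_mono inter_subset_left) hU'lt
    obtain ⟨t, ht⟩ := hK.elim_finite_subcover
      (fun x : K => connectedComponentIn U x)
      (fun x => hUopen.connectedComponentIn)
      (fun y hy => mem_iUnion.2 ⟨⟨y, hy⟩, mem_connectedComponentIn (hKU hy)⟩)
    set C : Finset (Set ℝ) := t.image (fun x : K => connectedComponentIn U x) with hC
    have hCopen : ∀ c ∈ C, IsOpen c := by
      intro c hc
      obtain ⟨i, _, rfl⟩ := Finset.mem_image.1 hc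
      exact hUopen.connectedComponentIn
    have hCsubU : ∀ c ∈ C, c ⊆ U := by
      intro c hc
      obtain ⟨i, _, rfl⟩ := Finset.mem_image.1 hc
      exact connectedComponentIn_subset _ _
    have hCdisj : (C : Set (Set ℝ)).PairwiseDisjoint (fun c => c) := by
      intro c1 h1 c2 h2 hne
      obtain ⟨i1, _, rfl⟩ := Finset.mem_image.1 h1
      obtain ⟨i2, _, rfl⟩ := Finset.mem_image.1 h2
      rw [Function.onFun, Set.disjoint_left]
      intro y hy1 hy2
      exact hne ((connectedComponentIn_eq hy1).trans (connectedComponentIn_eq hy2).symm)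
    have hKcover : K ⊆ ⋃ c ∈ C, c := by
      intro x hx
      obtain ⟨i, hi⟩ := mem_iUnion.1 (ht hx)
      obtain ⟨hit, hxc⟩ := mem_iUnion.1 hi
      exact mem_biUnion (Finset.mem_image_of_mem _ hit) hxc
    set Kf : Set ℝ → Set ℝ := fun c => K \ ⋃ c' ∈ C.erase c, c' with hKf
    have hKfsub : ∀ c, Kf c ⊆ K := fun c => diff_subset
    have hKfc : ∀ c ∈ C, Kf c ⊆ c := by
      intro c hc x hx
      obtain ⟨c'', hc''C, hxc''⟩ := mem_iUnion₂.1 (hKcover hx.1)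
      rcases eq_or_ne c'' c with rfl | hne
      · exact hxc''
      · exact absurd (mem_biUnion (Finset.mem_erase.2 ⟨hne, hc''C⟩) hxc'') hx.2
    have hper : ∀ c ∈ C, μ (Kf c) + β * μ c ≤ μ c := by
      intro c hc
      have hcopen := hCopen c hc
      have hcsub : c ⊆ B₀' := (hCsubU c hc).trans inter_subset_right
      have hcKf : IsCompact (Kf c) :=
        hK.diff (isOpen_biUnion fun c' hc' => hCopen c' (Finset.mem_of_mem_erase hc'))
      rcases Set.eq_empty_or_nonempty c with rfl | hcne
      · have h0 : μ (Kf ∅) = 0 := measure_mono_null (hKfc _ hc) measure_empty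
        simp [h0]
      · have hcIoo : c = Ioo (sInf c) (sSup c) :=
          open_preconnected_eq_Ioo hcopen (by
            obtain ⟨i, _, rfl⟩ := Finset.mem_image.1 hc
            exact isPreconnected_connectedComponentIn) hcne
            (BddBelow.mono hcsub bddBelow_Ioo) (BddAbove.mono hcsub bddAbove_Ioo)
        have hlt : sInf c < sSup c := by
          rcases hcne with ⟨y, hy⟩
          have := hcIoo ▸ hy
          exact lt_trans this.1 this.2
        have := compact_null_in_ball hp hlam hCPI hμ hCd0 hCdt hD hPI hτ0 hτ1 N hN
          (sInf c) (sSup c) hlt (by rw [← hcIoo]; exact hcsub)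
          (Kf c) hcKf (by rw [← hcIoo]; exact hKfc c hc)
          (measure_mono_null (hKfsub c) hK0)
        rw [← hcIoo] at this
        exact this
    -- summation
    have hsum1 : μ K ≤ ∑ c ∈ C, μ (Kf c) := by
      refine le_trans (measure_mono ?_) (measure_biUnion_finset_le C Kf)
      intro x hx
      obtain ⟨c, hcC, hxc⟩ := mem_iUnion₂.1 (hKcover hx)
      refine mem_biUnion hcC ⟨hx, ?_⟩
      intro hmem
      obtain ⟨c', hc'e, hxc'⟩ := mem_iUnion₂.1 hmem
      have hc'C := Finset.mem_of_mem_erase hc'e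
      have hne := (Finset.mem_erase.1 hc'e).1
      exact (Set.disjoint_left.1 (hCdisj hc'C hcC hne) hxc') hxc
    have hUnionEq : μ (⋃ c ∈ C, c) = ∑ c ∈ C, μ c :=
      measure_biUnion_finset hCdisj (fun c hc => (hCopen c hc).measurableSet)
    have hsum2 : ∑ c ∈ C, μ c ≤ μ U := by
      rw [← hUnionEq]
      exact measure_mono (iUnion₂_subset hCsubU)
    have hsum3 : (∑ c ∈ C, μ (Kf c)) + β * (∑ c ∈ C, μ c) ≤ ∑ c ∈ C, μ c := by
      rw [Finset.mul_sum, ← Finset.sum_add_distrib]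
      exact Finset.sum_le_sum hper
    have hKV : μ K ≤ ∑ c ∈ C, μ c :=
      le_trans (measure_mono hKcover) (le_of_eq hUnionEq)
    have hfinal : μ K + β * μ K < μ K + ε := by
      calc μ K + β * μ K ≤ (∑ c ∈ C, μ (Kf c)) + β * (∑ c ∈ C, μ c) :=
            add_le_add hsum1 (mul_le_mul_right hKV _)
        _ ≤ ∑ c ∈ C, μ c := hsum3
        _ ≤ μ U := hsum2
        _ < μ K + ε := hUlt
    exact le_of_lt ((ENNReal.add_lt_add_iff_left hμK).1 hfinal)
  have := le_antisymm hkey (zero_le)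
  rcases mul_eq_zero.1 this with h | h
  · exact absurd h hβ0
  · exact h


/-- The `A₁` estimate. -/
lemma ap_one
    (hlam : 1 ≤ lam) (hCPI : 0 < CPI)
    (hμ : IsMeasureOnR μ) (hCd0 : 0 < Cd) (hCdt : Cd < ⊤)
    (hD : DoublingWithinC μ Cd B₀) (hPI : LipPoincareWithinC μ 1 CPI lam B₀)
    {τ : ℝ} (hτ0 : 0 < τ) (hτ1 : τ < 1) (N : ℕ) (hN : 2 ≤ (3/2:ℝ)^N * (1-τ))
    (w : ℝ → ℝ) (hwmeas : Measurable w) (hw0 : ∀ x, 0 ≤ w x)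
    (z ρ : ℝ) (hρ : 0 < ρ) (hsub : Ioo (z - ρ) (z + ρ) ⊆ B₀)
    (hW : ∀ E : Set ℝ, MeasurableSet E → E ⊆ Ioo (z - τ*ρ) (z + τ*ρ) →
      μ E = ∫⁻ x in E, ENNReal.ofReal (w x)) :
    (∫⁻ x in Ioo (z - τ*ρ) (z + τ*ρ), ENNReal.ofReal (w x)) /
        volume (Ioo (z - τ*ρ) (z + τ*ρ))
      ≤ (Cd^N * ENNReal.ofReal CPI / ENNReal.ofReal (2*τ)) *
        essInf (fun x => ENNReal.ofReal (w x))
          (volume.restrict (Ioo (z - τ*ρ) (z + τ*ρ))) := by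
  classical
  set B' : Set ℝ := Ioo (z - τ*ρ) (z + τ*ρ) with hB'
  set lB : Set ℝ := Ioo (z - lam*ρ) (z + lam*ρ) with hlB
  have hτρ : 0 < τ*ρ := by positivity
  have hB'lB : B' ⊆ lB := Ioo_subset_Ioo (by nlinarith) (by nlinarith)
  have hL0 : μ lB ≠ 0 := (hμ _ _ (by nlinarith)).1.ne'
  have hLt : μ lB ≠ ⊤ := (hμ _ _ (by nlinarith)).2.ne
  set A : ℝ≥0∞ := Cd^N * ENNReal.ofReal CPI with hA
  have hA0 : A ≠ 0 := by
    refine mul_ne_zero (pow_ne_zero _ hCd0.ne') ?_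
    rw [ne_eq, ENNReal.ofReal_eq_zero, not_le]; exact hCPI
  have hAt : A ≠ ⊤ := ENNReal.mul_ne_top (ENNReal.pow_ne_top hCdt.ne) ENNReal.ofReal_ne_top
  set r' : ℝ≥0∞ := ENNReal.ofReal ρ with hr'
  have hr'0 : r' ≠ 0 := by rw [hr', ne_eq, ENNReal.ofReal_eq_zero, not_le]; exact hρ
  have hr't : r' ≠ ⊤ := ENNReal.ofReal_ne_top
  set C4 : ℝ≥0∞ := Cd^N * ENNReal.ofReal (CPI * ρ) with hC4
  have hC4A : C4 = A * r' := by
    rw [hC4, hA, hr', ENNReal.ofReal_mul hCPI.le, mul_assoc]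
  have hC40 : C4 ≠ 0 := by rw [hC4A]; exact mul_ne_zero hA0 hr'0
  have hC4t : C4 ≠ ⊤ := by rw [hC4A]; exact ENNReal.mul_ne_top hAt hr't
  set m₀ : ℝ≥0∞ := μ lB / C4 with hm₀
  have hm₀t : m₀ ≠ ⊤ := (ENNReal.div_lt_top hLt hC40).ne
  have hm₀0 : m₀ ≠ 0 := by
    rw [hm₀]
    exact (ENNReal.div_pos hL0 hC4t).ne'
  -- small sublevel sets are Lebesgue-null
  have hclaim : ∀ t : ℝ, ENNReal.ofReal t < m₀ → volume {x | x ∈ B' ∧ w x < t} = 0 := by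
    intro t ht
    by_contra hEpos
    set E : Set ℝ := {x | x ∈ B' ∧ w x < t} with hE
    have hEmeas : MeasurableSet E := by
      have hEeq : E = B' ∩ w ⁻¹' (Iio t) := by
        ext x; simp [hE, mem_preimage, mem_Iio]
      rw [hEeq]
      exact measurableSet_Ioo.inter (hwmeas measurableSet_Iio)
    have hEt : volume E ≠ ⊤ :=
      (lt_of_le_of_lt (measure_mono (fun x hx => hx.1)) (by
        rw [hB', Real.volume_Ioo]; exact ENNReal.ofReal_lt_top)).ne
    obtain ⟨K, hKE, hKcpt, hKlt⟩ := MeasurableSet.exists_isCompact_lt_add hEmeas hEt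
      (ε := volume E) hEpos
    have hvolK : volume K ≠ 0 := by
      intro h0
      rw [h0, zero_add] at hKlt
      exact lt_irrefl _ hKlt
    set k : ℝ → ℝ≥0 := K.indicator (fun _ => (1:ℝ≥0)) with hk
    have hkcoe : (fun s => (k s : ℝ≥0∞)) = K.indicator (fun _ => (1:ℝ≥0∞)) := by
      funext s; by_cases hs : s ∈ K <;> simp [hk, hs]
    have hkey := key_estimate le_rfl hlam hμ hD hPI hτ0 hτ1 N hN z ρ hρ hsub k 1
      (fun s => by by_cases hs : s ∈ K <;> simp [hk, hs])
      (hKcpt.isClosed.upperSemicontinuous_indicator zero_le_one)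
    have hKB' : K ⊆ B' := fun s hs => (hKE hs).1
    have hLHS : (∫⁻ s in B', (k s : ℝ≥0∞)) = volume K := by
      rw [hkcoe, lintegral_indicator hKcpt.measurableSet, setLIntegral_one,
        Measure.restrict_apply hKcpt.measurableSet, inter_eq_self_of_subset_left hKB']
    have hμKbd : (∫⁻ s in lB, ((k s : ℝ≥0∞))^(1:ℝ) ∂μ) ≤ ENNReal.ofReal t * volume K := by
      have h1 : (fun s => ((k s : ℝ≥0∞))^(1:ℝ)) = K.indicator (fun _ => (1:ℝ≥0∞)) := by
        rw [← hkcoe]; funext s; rw [ENNReal.rpow_one]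
      rw [h1, lintegral_indicator hKcpt.measurableSet, setLIntegral_one,
        Measure.restrict_apply hKcpt.measurableSet,
        inter_eq_self_of_subset_left (hKB'.trans hB'lB)]
      have h2 : μ K = ∫⁻ x in K, ENNReal.ofReal (w x) := hW K hKcpt.measurableSet hKB'
      rw [h2]
      calc (∫⁻ x in K, ENNReal.ofReal (w x))
          ≤ ∫⁻ _ in K, ENNReal.ofReal t :=
            setLIntegral_mono measurable_const fun x hx =>
              ENNReal.ofReal_le_ofReal (hKE hx).2.le
        _ = ENNReal.ofReal t * volume K := setLIntegral_const _ _
    have hc1 : C4 * (ENNReal.ofReal t * volume K / μ lB) < volume K := by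
      have hnum : C4 * ENNReal.ofReal t < μ lB := by
        have := (ENNReal.lt_div_iff_mul_lt (Or.inl hC40) (Or.inl hC4t)).1 ht
        calc C4 * ENNReal.ofReal t = ENNReal.ofReal t * C4 := mul_comm _ _
          _ < μ lB := this
      have hc : C4 * ENNReal.ofReal t / μ lB < 1 :=
        (ENNReal.div_lt_iff (Or.inl hL0) (Or.inl hLt)).2 (by rwa [one_mul])
      calc C4 * (ENNReal.ofReal t * volume K / μ lB)
          = (C4 * ENNReal.ofReal t / μ lB) * volume K := by
            rw [div_eq_mul_inv, div_eq_mul_inv]; ring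
        _ < 1 * volume K := ENNReal.mul_lt_mul_left hvolK
            (ne_top_of_le_ne_top hEt (measure_mono hKE)) hc
        _ = volume K := one_mul _
    have hcontr : volume K ≤ C4 * (ENNReal.ofReal t * volume K / μ lB) := by
      calc volume K = ∫⁻ s in B', (k s : ℝ≥0∞) := hLHS.symm
        _ ≤ C4 * ((∫⁻ s in lB, ((k s : ℝ≥0∞))^(1:ℝ) ∂μ) / μ lB)^(1/(1:ℝ)) := hkey
        _ = C4 * ((∫⁻ s in lB, ((k s : ℝ≥0∞))^(1:ℝ) ∂μ) / μ lB) := by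
            norm_num
        _ ≤ C4 * (ENNReal.ofReal t * volume K / μ lB) :=
            mul_le_mul_right (ENNReal.div_le_div_right hμKbd _) _
    exact absurd (lt_of_le_of_lt hcontr hc1) (lt_irrefl _)
  -- essInf lower bound
  have hess : m₀ ≤ essInf (fun x => ENNReal.ofReal (w x)) (volume.restrict B') := by
    refine le_essInf_of_ae_le _ ?_
    rw [Filter.EventuallyLE, ae_restrict_iff' measurableSet_Ioo]
    have hnull : volume {x | x ∈ B' ∧ ENNReal.ofReal (w x) < m₀} = 0 := by
      have hsubQ : {x | x ∈ B' ∧ ENNReal.ofReal (w x) < m₀} ⊆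
          ⋃ q : ℚ, {x | (ENNReal.ofReal (q:ℝ) < m₀) ∧ x ∈ B' ∧ w x < q} := by
        intro x hx
        have hwlt : w x < m₀.toReal := by
          have := hx.2
          rw [← ENNReal.ofReal_toReal hm₀t] at this
          exact (ENNReal.ofReal_lt_ofReal_iff_of_nonneg (hw0 x)).1 this
        obtain ⟨q, hq1, hq2⟩ := exists_rat_btwn hwlt
        refine mem_iUnion.2 ⟨q, ⟨?_, hx.1, hq1⟩⟩
        calc ENNReal.ofReal (q:ℝ) < ENNReal.ofReal m₀.toReal :=
              (ENNReal.ofReal_lt_ofReal_iff (ENNReal.toReal_pos hm₀0 hm₀t)).2 hq2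
          _ = m₀ := ENNReal.ofReal_toReal hm₀t
      refine measure_mono_null hsubQ (measure_iUnion_null fun q => ?_)
      by_cases hq : ENNReal.ofReal (q:ℝ) < m₀
      · refine measure_mono_null (fun x hx => ?_) (hclaim q hq)
        exact ⟨hx.2.1, hx.2.2⟩
      · convert measure_empty (μ := volume) (α := ℝ)
        ext x; simp only [mem_setOf_eq, mem_empty_iff_false, iff_false]
        intro hx; exact hq hx.1
    rw [ae_iff]
    refine measure_mono_null (fun x hx => ?_) hnull
    simp only [mem_setOf_eq] at hx ⊢
    push_neg at hx
    exact ⟨hx.1, hx.2⟩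
  -- final computation
  have hμB' : (∫⁻ x in B', ENNReal.ofReal (w x)) = μ B' :=
    (hW B' measurableSet_Ioo Subset.rfl).symm
  have hvolB' : volume B' = ENNReal.ofReal (2*τ) * r' := by
    rw [hB', Real.volume_Ioo, hr', ← ENNReal.ofReal_mul (by linarith)]
    congr 1; ring
  have ht0 : ENNReal.ofReal (2*τ) ≠ 0 := by
    rw [ne_eq, ENNReal.ofReal_eq_zero, not_le]; linarith
  have htt : ENNReal.ofReal (2*τ) ≠ ⊤ := ENNReal.ofReal_ne_top
  calc (∫⁻ x in B', ENNReal.ofReal (w x)) / volume B'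
      = μ B' / volume B' := by rw [hμB']
    _ ≤ μ lB / volume B' := ENNReal.div_le_div_right (measure_mono hB'lB) _
    _ = (A / ENNReal.ofReal (2*τ)) * m₀ := by
        rw [hm₀, hC4A, hvolB']
        rw [div_eq_mul_inv, div_eq_mul_inv, div_eq_mul_inv,
          ENNReal.mul_inv (Or.inl ht0) (Or.inl htt),
          ENNReal.mul_inv (Or.inl hA0) (Or.inl hAt)]
        calc μ lB * ((ENNReal.ofReal (2*τ))⁻¹ * r'⁻¹)
            = (A * A⁻¹) * (μ lB * ((ENNReal.ofReal (2*τ))⁻¹ * r'⁻¹)) := by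
              rw [ENNReal.mul_inv_cancel hA0 hAt, one_mul]
          _ = A * (ENNReal.ofReal (2*τ))⁻¹ * (μ lB * (A⁻¹ * r'⁻¹)) := by ring
    _ ≤ (A / ENNReal.ofReal (2*τ)) * essInf (fun x => ENNReal.ofReal (w x))
          (volume.restrict B') := mul_le_mul_right hess _


lemma ennreal_rpow_antitone {x y : ℝ≥0∞} (h : x ≤ y) {c : ℝ} (hc : c ≤ 0) :
    y ^ c ≤ x ^ c := by
  have he : ∀ t : ℝ≥0∞, t ^ c = (t ^ (-c))⁻¹ := fun t => by
    rw [← ENNReal.rpow_neg, neg_neg]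
  rw [he x, he y]
  exact ENNReal.inv_le_inv.2 (ENNReal.rpow_le_rpow h (by linarith))

/-- The `A_p` estimate for `p > 1`. -/
lemma ap_gt_one
    (hp : 1 < p) (hlam : 1 ≤ lam) (hCPI : 0 < CPI)
    (hμ : IsMeasureOnR μ) (hCd0 : 0 < Cd) (hCdt : Cd < ⊤)
    (hD : DoublingWithinC μ Cd B₀) (hPI : LipPoincareWithinC μ p CPI lam B₀)
    {τ : ℝ} (hτ0 : 0 < τ) (hτ1 : τ < 1) (N : ℕ) (hN : 2 ≤ (3/2:ℝ)^N * (1-τ))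
    (w : ℝ → ℝ) (hwmeas : Measurable w) (hw0 : ∀ x, 0 ≤ w x)
    (z ρ : ℝ) (hρ : 0 < ρ) (hsub : Ioo (z - ρ) (z + ρ) ⊆ B₀)
    (hWres : μ.restrict (Ioo (z - τ*ρ) (z + τ*ρ)) =
      (volume.restrict (Ioo (z - τ*ρ) (z + τ*ρ))).withDensity
        (fun x => ENNReal.ofReal (w x))) :
    (∫⁻ x in Ioo (z - τ*ρ) (z + τ*ρ), ENNReal.ofReal (w x)) /
        volume (Ioo (z - τ*ρ) (z + τ*ρ))
      ≤ ((Cd^N * ENNReal.ofReal CPI) / ENNReal.ofReal (2*τ))^p *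
        ((∫⁻ x in Ioo (z - τ*ρ) (z + τ*ρ), (ENNReal.ofReal (w x))^(1/(1-p))) /
          volume (Ioo (z - τ*ρ) (z + τ*ρ)))^(1-p) := by
  classical
  set B' : Set ℝ := Ioo (z - τ*ρ) (z + τ*ρ) with hB'
  set lB : Set ℝ := Ioo (z - lam*ρ) (z + lam*ρ) with hlB
  have hp0 : (0:ℝ) < p := by linarith
  have hp1 : (0:ℝ) < p - 1 := by linarith
  set e : ℝ := 1/(1-p) with he
  have he_neg : e < 0 := by
    rw [he]; exact div_neg_of_pos_of_neg one_pos (by linarith)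
  have h1p : (1:ℝ) - p ≠ 0 := by intro h; linarith
  have hep : 1 + e*p = e := by
    rw [he]; field_simp; ring
  have hτρ : 0 < τ*ρ := by positivity
  have hB'lB : B' ⊆ lB := Ioo_subset_Ioo (by nlinarith) (by nlinarith)
  have hL0 : μ lB ≠ 0 := (hμ _ _ (by nlinarith)).1.ne'
  have hLt : μ lB ≠ ⊤ := (hμ _ _ (by nlinarith)).2.ne
  set A : ℝ≥0∞ := Cd^N * ENNReal.ofReal CPI with hA
  have hA0 : A ≠ 0 := by
    refine mul_ne_zero (pow_ne_zero _ hCd0.ne') ?_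
    rw [ne_eq, ENNReal.ofReal_eq_zero, not_le]; exact hCPI
  have hAt : A ≠ ⊤ := ENNReal.mul_ne_top (ENNReal.pow_ne_top hCdt.ne) ENNReal.ofReal_ne_top
  set r' : ℝ≥0∞ := ENNReal.ofReal ρ with hr'
  have hr'0 : r' ≠ 0 := by rw [hr', ne_eq, ENNReal.ofReal_eq_zero, not_le]; exact hρ
  have hr't : r' ≠ ⊤ := ENNReal.ofReal_ne_top
  set C4 : ℝ≥0∞ := Cd^N * ENNReal.ofReal (CPI * ρ) with hC4
  have hC4A : C4 = A * r' := by
    rw [hC4, hA, hr', ENNReal.ofReal_mul hCPI.le, mul_assoc]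
  have hC40 : C4 ≠ 0 := by rw [hC4A]; exact mul_ne_zero hA0 hr'0
  have hC4t : C4 ≠ ⊤ := by rw [hC4A]; exact ENNReal.mul_ne_top hAt hr't
  set ta : ℝ≥0∞ := ENNReal.ofReal (2*τ) with hta
  have hta0 : ta ≠ 0 := by rw [hta, ne_eq, ENNReal.ofReal_eq_zero, not_le]; linarith
  have htat : ta ≠ ⊤ := ENNReal.ofReal_ne_top
  have hvolB' : volume B' = ta * r' := by
    rw [hB', Real.volume_Ioo, hta, hr', ← ENNReal.ofReal_mul (by linarith)]
    congr 1; ring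
  have hvol0 : volume B' ≠ 0 := by rw [hvolB']; exact mul_ne_zero hta0 hr'0
  have hvolt : volume B' ≠ ⊤ := by rw [hvolB']; exact ENNReal.mul_ne_top htat hr't
  -- truncated integrands
  set fn : ℕ → ℝ → ℝ≥0∞ := fun n x => (ENNReal.ofReal (max (w x) (1/(n+1))))^e with hfn
  have hfnm : ∀ n, Measurable (fn n) := fun n =>
    ENNReal.continuous_rpow_const.measurable.comp
      (hwmeas.max measurable_const).ennreal_ofReal
  have hbase0 : ∀ (n : ℕ) (x : ℝ), ENNReal.ofReal (max (w x) (1/(n+1))) ≠ 0 := by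
    intro n x
    rw [ne_eq, ENNReal.ofReal_eq_zero, not_le]
    have : (0:ℝ) < 1/((n:ℝ)+1) := by positivity
    exact lt_of_lt_of_le this (le_max_right _ _)
  have hfn_le : ∀ (n : ℕ) (x : ℝ), fn n x ≤ (ENNReal.ofReal (1/((n:ℝ)+1)))^e := fun n x =>
    ennreal_rpow_antitone (ENNReal.ofReal_le_ofReal (le_max_right _ _)) he_neg.le
  have hconst_t : ∀ n : ℕ, (ENNReal.ofReal (1/((n:ℝ)+1)))^e ≠ ⊤ := by
    intro n
    have h0' : ENNReal.ofReal (1/((n:ℝ)+1)) ≠ 0 := by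
      rw [ne_eq, ENNReal.ofReal_eq_zero, not_le]; positivity
    rw [ne_eq, ENNReal.rpow_eq_top_iff]
    push_neg
    exact ⟨fun h => absurd h h0', fun h => absurd h ENNReal.ofReal_ne_top⟩
  set Xn : ℕ → ℝ≥0∞ := fun n => ∫⁻ x in B', fn n x with hXn
  have hXn_fin : ∀ n, Xn n ≠ ⊤ := by
    intro n
    have h1 : Xn n ≤ (ENNReal.ofReal (1/((n:ℝ)+1)))^e * volume B' := by
      rw [hXn]
      calc (∫⁻ x in B', fn n x) ≤ ∫⁻ _ in B', (ENNReal.ofReal (1/((n:ℝ)+1)))^e :=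
            lintegral_mono fun x => hfn_le n x
        _ = _ := setLIntegral_const _ _
    exact ne_top_of_le_ne_top (ENNReal.mul_ne_top (hconst_t n) hvolt) h1
  -- key uniform bound
  have hXn_bound : ∀ n, Xn n ≤ C4 * (Xn n / μ lB)^(1/p) := by
    intro n
    have hRHSfin : C4 * (Xn n / μ lB)^(1/p) ≠ ⊤ :=
      ENNReal.mul_ne_top hC4t (ENNReal.rpow_ne_top_of_nonneg (by positivity)
        (ENNReal.div_lt_top (hXn_fin n) hL0).ne)
    refine ENNReal.le_of_forall_pos_le_add fun δ hδ _ => ?_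
    set gv : ℝ → ℝ≥0 := fun x => (fn n x).toNNReal with hgv
    set g : ℝ → ℝ≥0 := B'.indicator gv with hg
    have hfn_t : ∀ x, fn n x ≠ ⊤ := fun x => ne_top_of_le_ne_top (hconst_t n) (hfn_le n x)
    have hgv_coe : ∀ x, ((gv x : ℝ≥0∞)) = fn n x := fun x => ENNReal.coe_toNNReal (hfn_t x)
    have hg_coe : ∀ x ∈ B', ((g x : ℝ≥0∞)) = fn n x := by
      intro x hx
      rw [hg, Set.indicator_of_mem hx, hgv_coe]
    have hg_coe_le : ∀ x, ((g x : ℝ≥0∞)) ≤ fn n x := by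
      intro x
      by_cases hx : x ∈ B'
      · exact (hg_coe x hx).le
      · rw [hg, Set.indicator_of_notMem hx]; exact zero_le
    have hg_meas : Measurable g := by
      refine Measurable.indicator ?_ measurableSet_Ioo
      exact (hfnm n).ennreal_toNNReal
    set Mn : ℝ≥0 := ((ENNReal.ofReal (1/((n:ℝ)+1)))^e).toNNReal with hMn
    have hg_bd : ∀ x, g x ≤ Mn := by
      intro x
      by_cases hx : x ∈ B'
      · have h1 : ((g x : ℝ≥0∞)) ≤ (Mn : ℝ≥0∞) := by
          rw [hg_coe x hx, hMn, ENNReal.coe_toNNReal (hconst_t n)]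
          exact hfn_le n x
        exact_mod_cast h1
      · rw [hg, Set.indicator_of_notMem hx]; exact zero_le
    have hgfin : (∫⁻ x, (g x : ℝ≥0∞) ∂(volume.restrict B')) ≠ ⊤ := by
      refine ne_top_of_le_ne_top (hXn_fin n) ?_
      rw [hXn]
      exact lintegral_mono hg_coe_le
    obtain ⟨k, hk_le, hkUSC, hkint⟩ :=
      exists_upperSemicontinuous_le_lintegral_le g hgfin
        (ε := (δ : ℝ≥0∞)) (by exact_mod_cast hδ.ne')
    have hkey := key_estimate hp.le hlam hμ hD hPI hτ0 hτ1 N hN z ρ hρ hsub k Mn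
      (fun x => le_trans (hk_le x) (hg_bd x)) hkUSC
    have hXg : Xn n = ∫⁻ x in B', (g x : ℝ≥0∞) :=
      setLIntegral_congr_fun measurableSet_Ioo
        (fun x hx => (hg_coe x hx).symm)
    have hchain1 : Xn n ≤ (∫⁻ t in B', (k t : ℝ≥0∞)) + (δ : ℝ≥0∞) := by
      rw [hXg]; exact hkint
    have hchain2 : (∫⁻ t in lB, ((k t : ℝ≥0∞))^p ∂μ) ≤ Xn n := by
      have h1 : (∫⁻ t in lB, ((k t : ℝ≥0∞))^p ∂μ) ≤ ∫⁻ t in lB, ((g t : ℝ≥0∞))^p ∂μ :=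
        lintegral_mono fun t => ENNReal.rpow_le_rpow
          (by exact_mod_cast hk_le t) hp0.le
      have h2 : (fun t => ((g t : ℝ≥0∞))^p) = B'.indicator (fun t => (fn n t)^p) := by
        funext t
        by_cases ht : t ∈ B'
        · rw [Set.indicator_of_mem ht, hg_coe t ht]
        · rw [Set.indicator_of_notMem ht, hg, Set.indicator_of_notMem ht,
            ENNReal.coe_zero, ENNReal.zero_rpow_of_pos hp0]
      have h3 : (∫⁻ t in lB, ((g t : ℝ≥0∞))^p ∂μ) = ∫⁻ t in B', (fn n t)^p ∂μ := by
        rw [h2, lintegral_indicator measurableSet_Ioo, Measure.restrict_restrict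
          measurableSet_Ioo, inter_eq_self_of_subset_left hB'lB]
      have h4 : (∫⁻ t in B', (fn n t)^p ∂μ) = ∫⁻ t in B',
          ENNReal.ofReal (w t) * (fn n t)^p ∂volume := by
        have hmeas2 : Measurable fun t => (fn n t)^p :=
          ENNReal.continuous_rpow_const.measurable.comp (hfnm n)
        calc (∫⁻ t in B', (fn n t)^p ∂μ)
            = ∫⁻ t, (fn n t)^p ∂(μ.restrict B') := rfl
          _ = ∫⁻ t, (fn n t)^p ∂((volume.restrict B').withDensity
              (fun x => ENNReal.ofReal (w x))) := by rw [← hWres]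
          _ = ∫⁻ t, ((fun x => ENNReal.ofReal (w x)) * fun t => (fn n t)^p) t
              ∂(volume.restrict B') :=
              lintegral_withDensity_eq_lintegral_mul _ hwmeas.ennreal_ofReal hmeas2
          _ = _ := rfl
      have h5 : (∫⁻ t in B', ENNReal.ofReal (w t) * (fn n t)^p ∂volume) ≤ Xn n := by
        rw [hXn]
        refine lintegral_mono fun t => ?_
        have hb0 := hbase0 n t
        have hbt : ENNReal.ofReal (max (w t) (1/((n:ℝ)+1))) ≠ ⊤ := ENNReal.ofReal_ne_top
        calc ENNReal.ofReal (w t) * (fn n t)^p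
            ≤ (ENNReal.ofReal (max (w t) (1/((n:ℝ)+1))))^(1:ℝ) * (fn n t)^p := by
              rw [ENNReal.rpow_one]
              exact mul_le_mul_left (ENNReal.ofReal_le_ofReal (le_max_left _ _)) _
          _ = (ENNReal.ofReal (max (w t) (1/((n:ℝ)+1))))^(1:ℝ) *
              (ENNReal.ofReal (max (w t) (1/((n:ℝ)+1))))^(e*p) := by
              rw [hfn, ← ENNReal.rpow_mul]
          _ = (ENNReal.ofReal (max (w t) (1/((n:ℝ)+1))))^(1 + e*p) := by
              rw [← ENNReal.rpow_add _ _ hb0 hbt]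
          _ = fn n t := by rw [hep, hfn]
      calc (∫⁻ t in lB, ((k t : ℝ≥0∞))^p ∂μ) ≤ ∫⁻ t in lB, ((g t : ℝ≥0∞))^p ∂μ := h1
        _ = ∫⁻ t in B', (fn n t)^p ∂μ := h3
        _ = ∫⁻ t in B', ENNReal.ofReal (w t) * (fn n t)^p ∂volume := h4
        _ ≤ Xn n := h5
    calc Xn n ≤ (∫⁻ t in B', (k t : ℝ≥0∞)) + (δ : ℝ≥0∞) := hchain1
      _ ≤ C4 * ((∫⁻ t in lB, ((k t : ℝ≥0∞))^p ∂μ) / μ lB)^(1/p) + (δ : ℝ≥0∞) :=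
          add_le_add hkey le_rfl
      _ ≤ C4 * (Xn n / μ lB)^(1/p) + (δ : ℝ≥0∞) :=
          add_le_add (mul_le_mul_right (ENNReal.rpow_le_rpow
            (ENNReal.div_le_div_right hchain2 _) (by positivity)) _) le_rfl
  -- solve for Xn
  have hXn_pow : ∀ n, (Xn n)^(p-1) ≤ C4^p / μ lB := by
    intro n
    rcases eq_or_ne (Xn n) 0 with h0 | h0
    · rw [h0, ENNReal.zero_rpow_of_pos hp1]; exact zero_le
    · have hQt2 : ((Xn n / μ lB)^(1/p)) ≠ ⊤ :=
        ENNReal.rpow_ne_top_of_nonneg (by positivity)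
          (ENNReal.div_lt_top (hXn_fin n) hL0).ne
      have h1 : (Xn n)^p ≤ C4^p * (Xn n / μ lB) := by
        calc (Xn n)^p ≤ (C4 * (Xn n/μ lB)^(1/p))^p :=
              ENNReal.rpow_le_rpow (hXn_bound n) hp0.le
          _ = C4^p * ((Xn n/μ lB)^(1/p))^p := ENNReal.mul_rpow_of_ne_top hC4t hQt2 p
          _ = C4^p * (Xn n/μ lB) := by
              rw [← ENNReal.rpow_mul, one_div_mul_cancel hp0.ne', ENNReal.rpow_one]
      have h2 : (Xn n)^(p-1) * Xn n ≤ (C4^p / μ lB) * Xn n := by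
        calc (Xn n)^(p-1) * Xn n = (Xn n)^(p-1) * (Xn n)^(1:ℝ) := by rw [ENNReal.rpow_one]
          _ = (Xn n)^p := by rw [← ENNReal.rpow_add _ _ h0 (hXn_fin n)]; norm_num
          _ ≤ C4^p * (Xn n / μ lB) := h1
          _ = (C4^p / μ lB) * Xn n := by
              rw [div_eq_mul_inv, div_eq_mul_inv]; ring
      exact (ENNReal.mul_le_mul_iff_left h0 (hXn_fin n)).1 h2
  set Λ : ℝ≥0∞ := (C4^p / μ lB)^(1/(p-1)) with hΛ
  have hC4pt : C4^p ≠ ⊤ := ENNReal.rpow_ne_top_of_nonneg hp0.le hC4t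
  have hΛt : Λ ≠ ⊤ := ENNReal.rpow_ne_top_of_nonneg (by positivity)
    (ENNReal.div_lt_top hC4pt hL0).ne
  have hXn_le : ∀ n, Xn n ≤ Λ := by
    intro n
    have h1 := ENNReal.rpow_le_rpow (hXn_pow n) (le_of_lt (by positivity : (0:ℝ) < 1/(p-1)))
    rwa [← ENNReal.rpow_mul, mul_one_div_cancel hp1.ne', ENNReal.rpow_one] at h1
  -- monotone convergence
  set X₀ : ℝ≥0∞ := ∫⁻ x in B', (ENNReal.ofReal (w x))^e with hX₀
  have hmono : Monotone fn := by
    intro m n' hmn x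
    refine ennreal_rpow_antitone (ENNReal.ofReal_le_ofReal ?_) he_neg.le
    refine max_le_max le_rfl ?_
    apply div_le_div_of_nonneg_left zero_le_one (by positivity)
    exact_mod_cast add_le_add (Nat.cast_le.2 hmn) le_rfl
  have hsup : ∀ x, (⨆ n, fn n x) = (ENNReal.ofReal (w x))^e := by
    intro x
    rcases lt_or_eq_of_le (hw0 x) with hpos | h0
    · apply le_antisymm
      · refine iSup_le fun n => ?_
        exact ennreal_rpow_antitone (ENNReal.ofReal_le_ofReal (le_max_left _ _)) he_neg.le
      · obtain ⟨n, hn⟩ := exists_nat_ge (1/(w x))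
        have h1 : (1:ℝ)/((n:ℝ)+1) ≤ w x := by
          rw [div_le_iff₀ (by positivity)]
          rw [div_le_iff₀ hpos] at hn
          nlinarith
        have hmax : max (w x) (1/((n:ℝ)+1)) = w x := max_eq_left h1
        refine le_trans (le_of_eq ?_) (le_iSup (fun n => fn n x) n)
        rw [hfn]; simp only
        rw [hmax]
    · rw [← h0, ENNReal.ofReal_zero, ENNReal.zero_rpow_of_neg he_neg, eq_top_iff]
      rw [top_le_iff, iSup_eq_top]
      intro b hb
      have htend : Tendsto (fun s : ℝ => s ^ (-e)) atTop atTop :=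
        tendsto_rpow_atTop (by linarith)
      obtain ⟨s₀, hs₀⟩ := (htend.eventually_ge_atTop (b.toReal + 1)).exists_forall_of_atTop
      obtain ⟨n, hn⟩ := exists_nat_ge s₀
      refine ⟨n, ?_⟩
      have h2 : fn n x = ENNReal.ofReal ((1/((n:ℝ)+1))^e) := by
        rw [hfn]; simp only
        rw [max_eq_right (by rw [← h0]; positivity), ENNReal.ofReal_rpow_of_pos (by positivity)]
      have h3 : ((n:ℝ)+1)^(-e) = (1/((n:ℝ)+1))^e := by
        rw [one_div, Real.inv_rpow (by positivity), ← Real.rpow_neg (by positivity)]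
      have h4 : b.toReal + 1 ≤ ((n:ℝ)+1)^(-e) := hs₀ ((n:ℝ)+1) (by linarith)
      rw [h2]
      refine (ENNReal.lt_ofReal_iff_toReal_lt hb.ne).2 ?_
      rw [← h3]; linarith
  have hX₀sup : X₀ = ⨆ n, Xn n := by
    rw [hX₀, hXn]
    have h1 : (∫⁻ x in B', (ENNReal.ofReal (w x))^e) = ∫⁻ x in B', ⨆ n, fn n x :=
      lintegral_congr fun x => (hsup x).symm
    rw [h1]
    exact lintegral_iSup (fun n => hfnm n) hmono
  have hX₀le : X₀ ≤ Λ := by rw [hX₀sup]; exact iSup_le hXn_le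
  have hX₀t : X₀ ≠ ⊤ := ne_top_of_le_ne_top hΛt hX₀le
  have hX₀pow : X₀^(p-1) ≤ C4^p / μ lB := by
    calc X₀^(p-1) ≤ Λ^(p-1) := ENNReal.rpow_le_rpow hX₀le hp1.le
      _ = C4^p / μ lB := by
          rw [hΛ, ← ENNReal.rpow_mul, one_div_mul_cancel hp1.ne', ENNReal.rpow_one]
  -- final assembly
  have hμB'w : (∫⁻ x in B', ENNReal.ofReal (w x)) = μ B' := by
    have h1 : μ.restrict B' B' = μ B' := by
      rw [Measure.restrict_apply measurableSet_Ioo, inter_self]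
    rw [← h1, hWres, withDensity_apply _ measurableSet_Ioo,
      Measure.restrict_restrict measurableSet_Ioo, inter_self]
  set P : ℝ≥0∞ := A^p with hP
  set T : ℝ≥0∞ := ta^p with hT
  set R2 : ℝ≥0∞ := r'^p with hR2
  have hP0 : P ≠ 0 := by
    rw [hP, ne_eq, ENNReal.rpow_eq_zero_iff]; push_neg
    exact ⟨fun h => absurd h hA0, fun h => absurd h hAt⟩
  have hPt : P ≠ ⊤ := ENNReal.rpow_ne_top_of_nonneg hp0.le hAt
  have hT0 : T ≠ 0 := by
    rw [hT, ne_eq, ENNReal.rpow_eq_zero_iff]; push_neg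
    exact ⟨fun h => absurd h hta0, fun h => absurd h htat⟩
  have hTt : T ≠ ⊤ := ENNReal.rpow_ne_top_of_nonneg hp0.le htat
  have hR20 : R2 ≠ 0 := by
    rw [hR2, ne_eq, ENNReal.rpow_eq_zero_iff]; push_neg
    exact ⟨fun h => absurd h hr'0, fun h => absurd h hr't⟩
  have hR2t : R2 ≠ ⊤ := ENNReal.rpow_ne_top_of_nonneg hp0.le hr't
  have hC4p : C4^p = P * R2 := by
    rw [hC4A, ENNReal.mul_rpow_of_ne_top hAt hr't]
  have hX₀pow' : X₀^(p-1) ≤ P * R2 * (μ lB)⁻¹ := by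
    rw [← hC4p, ← div_eq_mul_inv]; exact hX₀pow
  have hX1 : P⁻¹ * R2⁻¹ * μ lB ≤ X₀^(1-p) := by
    have h2 : X₀^(1-p) = (X₀^(p-1))⁻¹ := by
      rw [← ENNReal.rpow_neg, neg_sub]
    have h3 : (P * R2 * (μ lB)⁻¹)⁻¹ = P⁻¹ * R2⁻¹ * μ lB := by
      rw [ENNReal.mul_inv (Or.inl (mul_ne_zero hP0 hR20))
        (Or.inl (ENNReal.mul_ne_top hPt hR2t)), inv_inv,
        ENNReal.mul_inv (Or.inl hP0) (Or.inl hPt)]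
    rw [h2, ← h3]
    exact ENNReal.inv_le_inv.2 hX₀pow'
  have hXdiv : (X₀ / volume B')^(1-p) = X₀^(1-p) * (volume B')^(p-1) := by
    rw [div_eq_mul_inv, ENNReal.mul_rpow_of_ne_top hX₀t (ENNReal.inv_ne_top.2 hvol0),
      ENNReal.inv_rpow, ← ENNReal.rpow_neg, neg_sub]
  have htasplit : ta^(p-1) = T * ta⁻¹ := by
    rw [show p-1 = p + (-1) by ring, ENNReal.rpow_add _ _ hta0 htat, ENNReal.rpow_neg_one, hT]
  have hr'split : r'^(p-1) = R2 * r'⁻¹ := by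
    rw [show p-1 = p + (-1) by ring, ENNReal.rpow_add _ _ hr'0 hr't, ENNReal.rpow_neg_one, hR2]
  have hvolsplit : (volume B')^(p-1) = (T * ta⁻¹) * (R2 * r'⁻¹) := by
    rw [hvolB', ENNReal.mul_rpow_of_ne_top htat hr't, htasplit, hr'split]
  have hAdiv : (A/ta)^p = P/T := by
    rw [ENNReal.div_rpow_of_nonneg _ _ hp0.le, hP, hT]
  have hcalc : (P/T) * ((P⁻¹ * R2⁻¹ * μ lB) * ((T * ta⁻¹) * (R2 * r'⁻¹)))
      = μ lB * (ta⁻¹ * r'⁻¹) := by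
    have e1 : P * P⁻¹ = 1 := ENNReal.mul_inv_cancel hP0 hPt
    have e2 : T⁻¹ * T = 1 := by rw [mul_comm]; exact ENNReal.mul_inv_cancel hT0 hTt
    have e3 : R2⁻¹ * R2 = 1 := by rw [mul_comm]; exact ENNReal.mul_inv_cancel hR20 hR2t
    calc (P/T) * ((P⁻¹ * R2⁻¹ * μ lB) * ((T * ta⁻¹) * (R2 * r'⁻¹)))
        = (P * P⁻¹) * ((T⁻¹ * T) * ((R2⁻¹ * R2) * (μ lB * (ta⁻¹ * r'⁻¹)))) := by
          rw [div_eq_mul_inv]; ring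
      _ = μ lB * (ta⁻¹ * r'⁻¹) := by rw [e1, e2, e3, one_mul, one_mul, one_mul]
  have hfinal1 : μ lB * (ta⁻¹ * r'⁻¹) ≤
      ((A/ta))^p * ((X₀ / volume B')^(1-p)) := by
    rw [hAdiv, hXdiv, hvolsplit, ← hcalc]
    exact mul_le_mul_right (mul_le_mul_left hX1 _) _
  calc (∫⁻ x in B', ENNReal.ofReal (w x)) / volume B' = μ B' / volume B' := by rw [hμB'w]
    _ ≤ μ lB / volume B' := ENNReal.div_le_div_right (measure_mono hB'lB) _
    _ = μ lB * (ta⁻¹ * r'⁻¹) := by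
        rw [hvolB', div_eq_mul_inv, ENNReal.mul_inv (Or.inl hta0) (Or.inl htat)]
    _ ≤ ((A/ta))^p * ((X₀ / volume B')^(1-p)) := hfinal1


/-- The restriction of `μ` to `B₀` is absolutely continuous w.r.t. Lebesgue measure. -/
lemma abs_cont_restrict
    (hp : 1 ≤ p) (hlam : 1 ≤ lam) (hCPI : 0 < CPI)
    (hμ : IsMeasureOnR μ) (hCd0 : 0 < Cd) (hCdt : Cd < ⊤)
    {x₀ R : ℝ} (hR : 0 < R)
    (hD : DoublingWithinC μ Cd (Ioo (x₀ - R) (x₀ + R)))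
    (hPI : LipPoincareWithinC μ p CPI lam (Ioo (x₀ - R) (x₀ + R)))
    {τ : ℝ} (hτ0 : 0 < τ) (hτ1 : τ < 1) (N : ℕ) (hN : 2 ≤ (3/2:ℝ)^N * (1-τ)) :
    μ.restrict (Ioo (x₀ - R) (x₀ + R)) ≪ volume := by
  have hfin : IsFiniteMeasure (μ.restrict (Ioo (x₀ - R) (x₀ + R))) := ⟨by
    rw [Measure.restrict_apply_univ]; exact (hμ _ _ (by linarith)).2⟩
  refine Measure.AbsolutelyContinuous.mk fun s hs hs0 => ?_
  haveI := hfin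
  rw [Measure.restrict_apply hs]
  set I₀ : Set ℝ := Ioo (x₀ - R) (x₀ + R) with hI₀
  set A : Set ℝ := s ∩ I₀ with hAdef
  have hAmeas : MeasurableSet A := hs.inter measurableSet_Ioo
  have hAI : μ.restrict I₀ A = μ A := by
    rw [Measure.restrict_apply hAmeas, hAdef, inter_assoc, inter_self]
  refine le_antisymm ?_ (zero_le)
  refine ENNReal.le_of_forall_pos_le_add fun ε hε _ => ?_
  rw [zero_add]
  have hfinA : μ.restrict I₀ A ≠ ⊤ := measure_ne_top _ _
  obtain ⟨K, hKA, hKcpt, hKlt⟩ := MeasurableSet.exists_isCompact_lt_add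
    (μ := μ.restrict I₀) hAmeas hfinA (ε := (ε:ℝ≥0∞)) (by exact_mod_cast hε.ne')
  have hK0 : volume K = 0 :=
    measure_mono_null (hKA.trans inter_subset_left) hs0
  have hKz : μ K = 0 := compact_null_zero hp hlam hCPI hμ hCd0 hCdt hR hD hPI
    hτ0 hτ1 N hN K hKcpt (hKA.trans inter_subset_right) hK0
  have hKz' : μ.restrict I₀ K = 0 := by
    rw [Measure.restrict_apply hKcpt.measurableSet]
    exact measure_mono_null inter_subset_left hKz
  calc μ A = μ.restrict I₀ A := hAI.symm
    _ ≤ μ.restrict I₀ K + (ε:ℝ≥0∞) := hKlt.le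
    _ = (ε:ℝ≥0∞) := by rw [hKz', zero_add]

end Main


end Aux

/-- Theorem 4.4: if `μ` is Lipschitz `p`-admissible within
a bounded open interval `I₀` (with explicit doubling constant `Cd` and
Poincaré constants `CPI`, `lam`) and `θ > 1`, then `dμ = w dt` on `I₀` with
`w` satisfying the `A_p` condition within `θ⁻¹I₀`, with an `A_p` constant
depending only on `θ`, `p` and the admissibility constants. -/
theorem Lipschitz_admissible_implies_Ap_within (p θ : ℝ) (hp : 1 ≤ p)
    (hθ : 1 < θ) (Cd : ℝ≥0∞) (hCd0 : 0 < Cd) (hCdtop : Cd < ⊤)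
    (CPI lam : ℝ) (hCPI : 0 < CPI) (hlam : 1 ≤ lam) :
    ∃ C' > (0:ℝ), ∀ (μ : Measure ℝ), IsMeasureOnR μ →
      ∀ x₀ R : ℝ, 0 < R →
        DoublingWithinC μ Cd (Ioo (x₀ - R) (x₀ + R)) →
        LipPoincareWithinC μ p CPI lam (Ioo (x₀ - R) (x₀ + R)) →
        ∃ w : ℝ → ℝ, (∀ x, 0 ≤ w x) ∧ Measurable w ∧
          μ.restrict (Ioo (x₀ - R) (x₀ + R)) =
            (volume.withDensity fun x => ENNReal.ofReal (w x)).restrict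
              (Ioo (x₀ - R) (x₀ + R)) ∧
          ∀ x r : ℝ, 0 < r → Ioo (x - r) (x + r) ⊆ Ioo (x₀ - R/θ) (x₀ + R/θ) →
            ApOn p w (Ioo (x - r) (x + r)) C' := by
  have hθ0 : (0:ℝ) < θ := lt_trans one_pos hθ
  set τ : ℝ := 1/θ with hτ
  have hτ0 : 0 < τ := by positivity
  have hτ1 : τ < 1 := by rw [hτ, div_lt_one hθ0]; exact hθ
  obtain ⟨N, hN'⟩ := pow_unbounded_of_one_lt (2/(1-τ)) (by norm_num : (1:ℝ) < 3/2)
  have h1τ : (0:ℝ) < 1 - τ := by linarith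
  have hN : 2 ≤ (3/2:ℝ)^N * (1-τ) := by
    rw [div_lt_iff₀ h1τ] at hN'
    linarith
  set cd : ℝ := Cd.toReal with hcd
  have hcd0 : 0 < cd := ENNReal.toReal_pos hCd0.ne' hCdtop.ne
  have hCdeq : Cd = ENNReal.ofReal cd := (ENNReal.ofReal_toReal hCdtop.ne).symm
  set a₁ : ℝ := (cd^N * CPI)/(2*τ) with ha₁
  have ha₁0 : 0 < a₁ := by positivity
  refine ⟨(a₁ + 1)^p, Real.rpow_pos_of_pos (by linarith) p, ?_⟩
  intro μ hμ x₀ R hR hD hPI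
  set I₀ : Set ℝ := Ioo (x₀ - R) (x₀ + R) with hI₀
  haveI : IsFiniteMeasure (μ.restrict I₀) := ⟨by
    rw [Measure.restrict_apply_univ]; exact (hμ _ _ (by linarith)).2⟩
  have hac : μ.restrict I₀ ≪ volume :=
    abs_cont_restrict hp hlam hCPI hμ hCd0 hCdtop hR hD hPI hτ0 hτ1 N hN
  set ν : Measure ℝ := μ.restrict I₀ with hν
  set w : ℝ → ℝ := fun x => (ν.rnDeriv volume x).toReal with hw
  have hw0 : ∀ x, 0 ≤ w x := fun x => ENNReal.toReal_nonneg
  have hwmeas : Measurable w := (Measure.measurable_rnDeriv ν volume).ennreal_toReal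
  have hdens : volume.withDensity (fun x => ENNReal.ofReal (w x)) = ν := by
    have h1 := Measure.withDensity_rnDeriv_eq ν volume hac
    rw [← h1]
    apply withDensity_congr_ae
    filter_upwards [Measure.rnDeriv_lt_top ν volume] with x hx
    rw [hw]; exact ENNReal.ofReal_toReal hx.ne
  have hRepr : μ.restrict I₀ =
      (volume.withDensity fun x => ENNReal.ofReal (w x)).restrict I₀ := by
    rw [hdens, hν, Measure.restrict_restrict measurableSet_Ioo, inter_self]
  refine ⟨w, hw0, hwmeas, hRepr, ?_⟩
  intro x r hr hsubθ
  have hRθ : R/θ < R := by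
    rw [div_lt_iff₀ hθ0]; nlinarith
  have hgeo := (Ioo_subset_Ioo_iff (by linarith : x - r < x + r)).1 hsubθ
  have hrR : r ≤ R/θ := by
    have := hgeo.1; have := hgeo.2; linarith
  set ρ : ℝ := θ*r with hρ'
  have hρpos : 0 < ρ := by positivity
  have hτρ : τ*ρ = r := by rw [hτ, hρ']; field_simp
  have hmulr : (θ-1)*r ≤ (θ-1)*(R/θ) :=
    mul_le_mul_of_nonneg_left hrR (by linarith)
  have hfld : (θ-1)*(R/θ) = R - R/θ := by field_simp
  have hsubI : Ioo (x - ρ) (x + ρ) ⊆ I₀ := by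
    rw [hI₀]
    apply Ioo_subset_Ioo
    · have h4 : (θ-1)*r = θ*r - r := by ring
      have := hgeo.1; linarith [hmulr, hfld]
    · have h4 : (θ-1)*r = θ*r - r := by ring
      have := hgeo.2; linarith [hmulr, hfld]
  have hBeq : Ioo (x - τ*ρ) (x + τ*ρ) = Ioo (x - r) (x + r) := by rw [hτρ]
  have hsubI₀ : Ioo (x - r) (x + r) ⊆ I₀ := by
    refine subset_trans hsubθ (Ioo_subset_Ioo (by linarith) (by linarith))
  have hW : ∀ E : Set ℝ, MeasurableSet E → E ⊆ Ioo (x - τ*ρ) (x + τ*ρ) →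
      μ E = ∫⁻ t in E, ENNReal.ofReal (w t) := by
    intro E hE hEsub
    have hEI : E ⊆ I₀ := (hEsub.trans (by rw [hBeq])).trans hsubI₀
    have h1 : μ E = μ.restrict I₀ E := by
      rw [Measure.restrict_apply hE, inter_eq_self_of_subset_left hEI]
    rw [h1, hRepr, Measure.restrict_apply hE, inter_eq_self_of_subset_left hEI,
      withDensity_apply _ hE]
  have hWres : μ.restrict (Ioo (x - τ*ρ) (x + τ*ρ)) =
      (volume.restrict (Ioo (x - τ*ρ) (x + τ*ρ))).withDensity
        (fun t => ENNReal.ofReal (w t)) := by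
    rw [hBeq]
    have h1 : μ.restrict (Ioo (x-r) (x+r)) = (μ.restrict I₀).restrict (Ioo (x-r) (x+r)) := by
      rw [Measure.restrict_restrict measurableSet_Ioo,
        inter_eq_self_of_subset_left hsubI₀]
    rw [h1, hRepr, Measure.restrict_restrict measurableSet_Ioo,
      inter_eq_self_of_subset_left hsubI₀, restrict_withDensity measurableSet_Ioo]
  -- the constant comparison
  have hconstEq : Cd^N * ENNReal.ofReal CPI / ENNReal.ofReal (2*τ) = ENNReal.ofReal a₁ := by
    rw [hCdeq, ← ENNReal.ofReal_pow hcd0.le, ← ENNReal.ofReal_mul (by positivity),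
      ← ENNReal.ofReal_div_of_pos (by linarith), ha₁]
  constructor
  · -- p = 1
    intro hp1
    subst hp1
    have hmain := ap_one hlam hCPI hμ hCd0 hCdtop hD hPI hτ0 hτ1 N hN w hwmeas hw0
      x ρ hρpos hsubI hW
    rw [hBeq] at hmain
    refine le_trans hmain (mul_le_mul_left ?_ _)
    rw [hconstEq]
    refine ENNReal.ofReal_le_ofReal ?_
    rw [Real.rpow_one]
    linarith
  · -- p ≠ 1
    intro hpne
    have hp1 : 1 < p := lt_of_le_of_ne hp (Ne.symm hpne)
    have hmain := ap_gt_one hp1 hlam hCPI hμ hCd0 hCdtop hD hPI hτ0 hτ1 N hN w hwmeas hw0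
      x ρ hρpos hsubI hWres
    rw [hBeq] at hmain
    refine le_trans hmain (mul_le_mul_left ?_ _)
    rw [hconstEq]
    rw [ENNReal.ofReal_rpow_of_pos ha₁0]
    refine ENNReal.ofReal_le_ofReal ?_
    exact Real.rpow_le_rpow ha₁0.le (by linarith) (by linarith)
end

section
/- Let 1 ≤ p < ∞ and let μ₁ and μ₂ be locally p-admissible measures on ℝ. Then μ = μ₁ + μ₂ is locally p-admissible on ℝ. -/
open MeasureTheory Set Filter
open scoped ENNReal NNReal Topology

section AuxProofs

open ENNReal

lemma scale_incl {x r x₀ R R' s : ℝ} (hr : 0 < r) (hs : 1 ≤ s)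
    (hxl : x₀ - R ≤ x - r) (hxr : x + r ≤ x₀ + R) (hsR : s * R ≤ R') :
    Ioo (x - s*r) (x + s*r) ⊆ Ioo (x₀ - R') (x₀ + R') := by
  have hrR : r ≤ R := by linarith
  have h1 : (s - 1) * r ≤ (s - 1) * R := mul_le_mul_of_nonneg_left hrR (by linarith)
  apply Set.Ioo_subset_Ioo <;> nlinarith

lemma dbl_chain {ν : Measure ℝ} {Cd : ℝ≥0∞} {B₀ : Set ℝ}
    (hdbl : DoublingWithinC ν Cd B₀) (c : ℝ) :
    ∀ (k : ℕ) (s : ℝ), 0 < s → Ioo (c - 2^k * s) (c + 2^k * s) ⊆ B₀ →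
      ν (Ioo (c - 2^k * s) (c + 2^k * s)) ≤ Cd^k * ν (Ioo (c - s) (c + s)) := by
  intro k
  induction k with
  | zero => intro s hs hsub; simp
  | succ k ih =>
    intro s hs hsub
    have hpow : (0:ℝ) < 2^k := by positivity
    have hpow2 : (2:ℝ)^k ≤ 2^(k+1) := by
      have : (2:ℝ)^(k+1) = 2 * 2^k := by ring
      nlinarith
    have hsub' : Ioo (c - 2^k * s) (c + 2^k * s) ⊆ B₀ := by
      refine (Set.Ioo_subset_Ioo ?_ ?_).trans hsub <;> nlinarith
    calc ν (Ioo (c - 2^(k+1) * s) (c + 2^(k+1) * s))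
        = ν (Ioo (c - 2*(2^k * s)) (c + 2*(2^k * s))) := by
          rw [show (2:ℝ)^(k+1) * s = 2*(2^k*s) by ring]
      _ ≤ Cd * ν (Ioo (c - 2^k * s) (c + 2^k * s)) := hdbl c (2^k*s) (by positivity) hsub'
      _ ≤ Cd * (Cd^k * ν (Ioo (c - s) (c + s))) := mul_le_mul_right (ih s hs hsub') _
      _ = Cd^(k+1) * ν (Ioo (c - s) (c + s)) := by rw [pow_succ]; ring

lemma rpow_le_one_add (a : ℝ≥0∞) {z : ℝ} (hz0 : 0 ≤ z) (hz1 : z ≤ 1) : a ^ z ≤ 1 + a := by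
  rcases le_total a 1 with h | h
  · calc a ^ z ≤ 1 ^ z := ENNReal.rpow_le_rpow h hz0
      _ = 1 := ENNReal.one_rpow z
      _ ≤ 1 + a := le_self_add
  · calc a ^ z ≤ a ^ (1:ℝ) := ENNReal.rpow_le_rpow_of_exponent_le h hz1
      _ = a := ENNReal.rpow_one a
      _ ≤ 1 + a := le_add_self

/-- Step 1: the Poincaré left-hand side is bounded by the Lebesgue integral
of the gradient over the ball. -/
lemma avg_dev_le (μ : Measure ℝ) (x r : ℝ)
    (hμ0 : μ (Ioo (x - r) (x + r)) ≠ 0) (hμt : μ (Ioo (x - r) (x + r)) ≠ ⊤)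
    (u g : ℝ → ℝ)
    (hu : IntegrableOn u (Ioo (x - r) (x + r)) μ)
    (hgrad : ∀ a b : ℝ, a ≤ b → Icc a b ⊆ Ioo (x - r) (x + r) →
      ENNReal.ofReal |u b - u a| ≤ ∫⁻ t in Icc a b, ENNReal.ofReal (g t)) :
    PoinLHS μ u (Ioo (x - r) (x + r)) ≤ ∫⁻ t in Ioo (x - r) (x + r), ENNReal.ofReal (g t) := by
  set B := Ioo (x - r) (x + r) with hBdef
  set G := ∫⁻ t in B, ENNReal.ofReal (g t) with hGdef
  set m := ⨍ s in B, u s ∂μ with hm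
  have hpt : ∀ t ∈ B, ENNReal.ofReal |u t - m| ≤ G := by
    intro t ht
    by_cases hG : G = ⊤
    · rw [hG]; exact le_top
    have hub : ∀ s ∈ B, |u t - u s| ≤ G.toReal := by
      have key : ∀ a b : ℝ, a ∈ B → b ∈ B → a ≤ b → |u b - u a| ≤ G.toReal := by
        intro a b ha hb hab
        have hIcc : Icc a b ⊆ B := fun y hy => ⟨lt_of_lt_of_le ha.1 hy.1, lt_of_le_of_lt hy.2 hb.2⟩
        have h1 : ENNReal.ofReal |u b - u a| ≤ G :=
          (hgrad a b hab hIcc).trans (lintegral_mono_set hIcc)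
        have h2 := ENNReal.toReal_mono hG h1
        rwa [ENNReal.toReal_ofReal (abs_nonneg _)] at h2
      intro s hs
      rcases le_total s t with h | h
      · exact key s t hs ht h
      · rw [abs_sub_comm]; exact key t s ht hs h
    have hconst : IntegrableOn (fun _ : ℝ => u t) B μ :=
      integrableOn_const hμt
    have habs : IntegrableOn (fun s => |u t - u s|) B μ := (hconst.sub hu).abs
    have hμBpos : 0 < (μ B).toReal := ENNReal.toReal_pos hμ0 hμt
    have hmle : |u t - m| ≤ G.toReal := by
      have hsubm : u t - m = (μ B).toReal⁻¹ • ∫ s in B, (u t - u s) ∂μ := by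
        rw [hm, setAverage_eq, integral_sub hconst hu, setIntegral_const]
        rw [smul_eq_mul, smul_eq_mul, smul_eq_mul]
        simp only [measureReal_def]
        field_simp
      rw [hsubm, smul_eq_mul]
      have h3 : |∫ s in B, (u t - u s) ∂μ| ≤ ∫ s in B, |u t - u s| ∂μ := by
        have := norm_integral_le_integral_norm (μ := μ.restrict B) (f := fun s => u t - u s)
        simpa [Real.norm_eq_abs] using this
      have h4 : ∫ s in B, |u t - u s| ∂μ ≤ ∫ _ in B, G.toReal ∂μ :=
        setIntegral_mono_on habs (integrableOn_const hμt)
          measurableSet_Ioo hub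
      have h5 : (∫ _ in B, G.toReal ∂μ) = (μ B).toReal * G.toReal := by
        rw [setIntegral_const, smul_eq_mul, measureReal_def]
      have h6 : |(μ B).toReal⁻¹ * ∫ s in B, (u t - u s) ∂μ| ≤
          (μ B).toReal⁻¹ * ((μ B).toReal * G.toReal) := by
        rw [abs_mul, abs_of_nonneg (inv_nonneg.2 hμBpos.le)]
        refine mul_le_mul_of_nonneg_left ?_ (inv_nonneg.2 hμBpos.le)
        exact h3.trans (h4.trans_eq h5)
      refine h6.trans_eq ?_
      field_simp
    calc ENNReal.ofReal |u t - m| ≤ ENNReal.ofReal G.toReal := ENNReal.ofReal_le_ofReal hmle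
      _ = G := ENNReal.ofReal_toReal hG
  have hT : (∫⁻ t in B, ENNReal.ofReal |u t - m| ∂μ) ≤ G * μ B := by
    calc ∫⁻ t in B, ENNReal.ofReal |u t - m| ∂μ ≤ ∫⁻ _ in B, G ∂μ := by
          refine lintegral_mono_ae ?_
          exact (ae_restrict_iff' measurableSet_Ioo).2 (ae_of_all _ hpt)
      _ = G * μ B := setLIntegral_const B G
  show (∫⁻ t in B, ENNReal.ofReal |u t - m| ∂μ) / μ B ≤ G
  exact ENNReal.div_le_of_le_mul hT

/-- Core lemma: the Lebesgue integral of a nonnegative function over a ball is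
controlled by the Poincaré right-hand side of an admissible measure. -/
lemma lemA (ν : Measure ℝ) (hν : IsMeasureOnR ν) (p : ℝ) (hp : 1 ≤ p)
    (Cd : ℝ≥0∞) (hCd0 : Cd ≠ 0) (hCdt : Cd ≠ ⊤) (B₀ : Set ℝ) (hdbl : DoublingWithinC ν Cd B₀)
    (C lam : ℝ) (hC : 0 < C) (hlam : 1 ≤ lam) (hP : PoincareWithinC ν p C lam B₀)
    (x r : ℝ) (hr : 0 < r) (hsub : Ioo (x - 8*lam*r) (x + 8*lam*r) ⊆ B₀)
    (g : ℝ → ℝ) (hg0 : ∀ t, 0 ≤ g t) (hgm : Measurable g) :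
    (∫⁻ t in Ioo (x - r) (x + r), ENNReal.ofReal (g t)) ≤
      ENNReal.ofReal (4*C) * Cd^3 * ENNReal.ofReal r *
        PoinRHS ν (fun t => ENNReal.ofReal (g t)) p (Ioo (x - lam*(2*r)) (x + lam*(2*r))) := by
  have hp0 : (0:ℝ) < p := by linarith
  set Q := PoinRHS ν (fun t => ENNReal.ofReal (g t)) p (Ioo (x - lam*(2*r)) (x + lam*(2*r)))
    with hQdef
  suffices hN : ∀ N : ℕ, (∫⁻ t in Ioo (x - r) (x + r), ENNReal.ofReal (min (g t) N)) ≤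
      ENNReal.ofReal (4*C) * Cd^3 * ENNReal.ofReal r * Q by
    have hptw : ∀ t : ℝ, ENNReal.ofReal (g t) = ⨆ N : ℕ, ENNReal.ofReal (min (g t) N) := by
      intro t
      refine le_antisymm ?_ (iSup_le fun N => ENNReal.ofReal_le_ofReal (min_le_left _ _))
      obtain ⟨N, hN'⟩ := exists_nat_ge (g t)
      have he : ENNReal.ofReal (g t) = ENNReal.ofReal (min (g t) N) := by rw [min_eq_left hN']
      rw [he]
      exact le_iSup (fun N : ℕ => ENNReal.ofReal (min (g t) N)) N
    calc (∫⁻ t in Ioo (x - r) (x + r), ENNReal.ofReal (g t))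
        = ∫⁻ t in Ioo (x - r) (x + r), ⨆ N : ℕ, ENNReal.ofReal (min (g t) N) :=
          lintegral_congr fun t => hptw t
      _ = ⨆ N : ℕ, ∫⁻ t in Ioo (x - r) (x + r), ENNReal.ofReal (min (g t) N) :=
          lintegral_iSup (fun N => (hgm.min measurable_const).ennreal_ofReal)
            (fun N M hNM t => ENNReal.ofReal_le_ofReal (min_le_min le_rfl (Nat.cast_le.2 hNM)))
      _ ≤ _ := iSup_le hN
  intro N
  set gN : ℝ → ℝ := fun t => min (g t) N with hgNdef
  have hgNm : Measurable gN := hgm.min measurable_const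
  have hgN0 : ∀ t, 0 ≤ gN t := fun t => le_min (hg0 t) (Nat.cast_nonneg N)
  set a₀ := x - lam*(2*r) with ha₀
  set uN : ℝ → ℝ := fun y => ∫ t in a₀..y, gN t with huNdef
  have hgNint : ∀ a b : ℝ, IntervalIntegrable gN volume a b := by
    intro a b
    rw [intervalIntegrable_iff]
    refine Integrable.mono' (g := fun _ : ℝ => (N:ℝ)) (integrableOn_const ?_)
      hgNm.aestronglyMeasurable (ae_of_all _ fun t => ?_)
    · rw [Real.volume_uIoc]; exact ENNReal.ofReal_ne_top
    · rw [Real.norm_eq_abs, abs_of_nonneg (hgN0 t)]; exact min_le_right _ _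
  have hdiff : ∀ a b : ℝ, uN b - uN a = ∫ t in a..b, gN t := fun a b =>
    intervalIntegral.integral_interval_sub_left (hgNint a₀ b) (hgNint a₀ a)
  have hmono : Monotone uN := by
    intro a b hab
    have h0 : 0 ≤ ∫ t in a..b, gN t :=
      intervalIntegral.integral_nonneg hab (fun t _ => hgN0 t)
    have := hdiff a b
    linarith
  have hofReal : ∀ a b : ℝ, a ≤ b →
      ENNReal.ofReal (uN b - uN a) = ∫⁻ t in Ioc a b, ENNReal.ofReal (gN t) := by
    intro a b hab
    rw [hdiff a b, intervalIntegral.integral_of_le hab]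
    refine ofReal_integral_eq_lintegral_ofReal ?_ (ae_of_all _ hgN0)
    have h1 := (hgNint a b).1
    exact h1
  have hUG : IsUpperGradientOn gN uN (Ioo (x - lam*(2*r)) (x + lam*(2*r))) := by
    refine ⟨hgN0, hgNm, fun a b hab hIcc => ?_⟩
    rw [abs_of_nonneg (sub_nonneg.2 (hmono hab)), hofReal a b hab]
    exact lintegral_mono_set Ioc_subset_Icc_self
  have hJbound : ∀ y ∈ Ioo (x - lam*(2*r)) (x + lam*(2*r)), |uN y| ≤ (N:ℝ) * (4*lam*r) := by
    intro y hy
    have hy1 : x - lam*(2*r) < y := hy.1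
    have hy2 : y < x + lam*(2*r) := hy.2
    have hb : ∀ t ∈ Set.uIoc a₀ y, ‖gN t‖ ≤ (N:ℝ) := fun t _ => by
      rw [Real.norm_eq_abs, abs_of_nonneg (hgN0 t)]; exact min_le_right _ _
    have h1 := intervalIntegral.norm_integral_le_of_norm_le_const hb
    rw [Real.norm_eq_abs] at h1
    refine h1.trans ?_
    have hyb : |y - a₀| ≤ 4*lam*r := by
      rw [ha₀, abs_le]; constructor <;> nlinarith
    have hN0 : (0:ℝ) ≤ (N:ℝ) := Nat.cast_nonneg N
    exact mul_le_mul_of_nonneg_left hyb hN0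
  have hIntOn : IntegrableOn uN (Ioo (x - lam*(2*r)) (x + lam*(2*r))) ν := by
    have hνJ : ν (Ioo (x - lam*(2*r)) (x + lam*(2*r))) < ⊤ :=
      (hν (x - lam*(2*r)) (x + lam*(2*r)) (by nlinarith)).2
    refine Integrable.mono' (g := fun _ : ℝ => (N:ℝ) * (4*lam*r))
      (integrableOn_const hνJ.ne) hmono.measurable.aestronglyMeasurable ?_
    refine (ae_restrict_iff' measurableSet_Ioo).2 (ae_of_all _ fun y hy => ?_)
    rw [Real.norm_eq_abs]; exact hJbound y hy
  have hsub2 : Ioo (x - 2*r) (x + 2*r) ⊆ B₀ := by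
    refine (Set.Ioo_subset_Ioo ?_ ?_).trans hsub <;> nlinarith
  have hPB := hP x (2*r) (by linarith) hsub2 uN gN hIntOn hUG
  set m := (⨍ s in Ioo (x - 2*r) (x + 2*r), uN s ∂ν) with hmdef
  set α := uN (x - r) with hα
  set β := uN (x + r) with hβ
  have hαβ : α ≤ β := hmono (by linarith)
  have hval : (∫⁻ t in Ioo (x - r) (x + r), ENNReal.ofReal (gN t)) = ENNReal.ofReal (β - α) := by
    rw [setLIntegral_congr (Ioo_ae_eq_Ioc (a := x - r) (b := x + r)),
      ← hofReal (x - r) (x + r) (by linarith)]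
  have hνB2 := hν (x - 2*r) (x + 2*r) (by linarith)
  have hB2ne0 : ν (Ioo (x - 2*r) (x + 2*r)) ≠ 0 := hνB2.1.ne'
  have hB2net : ν (Ioo (x - 2*r) (x + 2*r)) ≠ ⊤ := hνB2.2.ne
  set RHS' := ENNReal.ofReal (C * (2*r)) *
    PoinRHS ν (fun t => ENNReal.ofReal (gN t)) p (Ioo (x - lam*(2*r)) (x + lam*(2*r))) with hRHSdef
  have hPB' : (∫⁻ t in Ioo (x - 2*r) (x + 2*r), ENNReal.ofReal |uN t - m| ∂ν) /
      ν (Ioo (x - 2*r) (x + 2*r)) ≤ RHS' := hPB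
  have hT2 : (∫⁻ t in Ioo (x - 2*r) (x + 2*r), ENNReal.ofReal |uN t - m| ∂ν) ≤
      RHS' * ν (Ioo (x - 2*r) (x + 2*r)) := (ENNReal.div_le_iff hB2ne0 hB2net).1 hPB'
  have hmeasf : Measurable (fun t => ENNReal.ofReal |uN t - m|) :=
    ((hmono.measurable.sub measurable_const).abs).ennreal_ofReal
  have hkey : ENNReal.ofReal ((β - α)/2) ≤ RHS' * Cd^3 := by
    rcases le_total m ((α + β)/2) with hcase | hcase
    · -- right interval
      have hνRt := hν (x + r) (x + 2*r) (by linarith)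
      have hlow : ENNReal.ofReal ((β - α)/2) * ν (Ioo (x + r) (x + 2*r)) ≤
          ∫⁻ t in Ioo (x - 2*r) (x + 2*r), ENNReal.ofReal |uN t - m| ∂ν := by
        calc ENNReal.ofReal ((β - α)/2) * ν (Ioo (x + r) (x + 2*r))
            = ∫⁻ _ in Ioo (x + r) (x + 2*r), ENNReal.ofReal ((β - α)/2) ∂ν :=
              (setLIntegral_const _ _).symm
          _ ≤ ∫⁻ t in Ioo (x + r) (x + 2*r), ENNReal.ofReal |uN t - m| ∂ν := by
              refine setLIntegral_mono hmeasf fun t ht => ?_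
              refine ENNReal.ofReal_le_ofReal ?_
              have h1 : β ≤ uN t := hmono (le_of_lt ht.1)
              rw [abs_of_nonneg (by linarith)]
              linarith
          _ ≤ _ := lintegral_mono_set (Set.Ioo_subset_Ioo (by linarith) (by linarith))
      have hchain := dbl_chain hdbl (x + 3/2*r) 3 (r/2) (by linarith)
        (by refine (Set.Ioo_subset_Ioo ?_ ?_).trans hsub <;> nlinarith)
      have hdblRt : ν (Ioo (x - 2*r) (x + 2*r)) ≤ Cd^3 * ν (Ioo (x + r) (x + 2*r)) := by
        have h1 : ν (Ioo (x - 2*r) (x + 2*r)) ≤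
            ν (Ioo (x + 3/2*r - 2^3*(r/2)) (x + 3/2*r + 2^3*(r/2))) := by
          apply measure_mono; apply Set.Ioo_subset_Ioo <;> nlinarith
        have h2 : Ioo (x + 3/2*r - r/2) (x + 3/2*r + r/2) = Ioo (x + r) (x + 2*r) := by
          congr 1 <;> ring
        rw [h2] at hchain
        exact h1.trans hchain
      have hcomb : ENNReal.ofReal ((β - α)/2) * ν (Ioo (x + r) (x + 2*r)) ≤
          (RHS' * Cd^3) * ν (Ioo (x + r) (x + 2*r)) := by
        calc ENNReal.ofReal ((β - α)/2) * ν (Ioo (x + r) (x + 2*r))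
            ≤ RHS' * ν (Ioo (x - 2*r) (x + 2*r)) := hlow.trans hT2
          _ ≤ RHS' * (Cd^3 * ν (Ioo (x + r) (x + 2*r))) := mul_le_mul_right hdblRt _
          _ = (RHS' * Cd^3) * ν (Ioo (x + r) (x + 2*r)) := by ring
      exact (ENNReal.mul_le_mul_iff_left hνRt.1.ne' hνRt.2.ne).1 hcomb
    · -- left interval
      have hνLt := hν (x - 2*r) (x - r) (by linarith)
      have hlow : ENNReal.ofReal ((β - α)/2) * ν (Ioo (x - 2*r) (x - r)) ≤
          ∫⁻ t in Ioo (x - 2*r) (x + 2*r), ENNReal.ofReal |uN t - m| ∂ν := by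
        calc ENNReal.ofReal ((β - α)/2) * ν (Ioo (x - 2*r) (x - r))
            = ∫⁻ _ in Ioo (x - 2*r) (x - r), ENNReal.ofReal ((β - α)/2) ∂ν :=
              (setLIntegral_const _ _).symm
          _ ≤ ∫⁻ t in Ioo (x - 2*r) (x - r), ENNReal.ofReal |uN t - m| ∂ν := by
              refine setLIntegral_mono hmeasf fun t ht => ?_
              refine ENNReal.ofReal_le_ofReal ?_
              have h1 : uN t ≤ α := hmono (le_of_lt ht.2)
              rw [abs_sub_comm, abs_of_nonneg (by linarith)]
              linarith
          _ ≤ _ := lintegral_mono_set (Set.Ioo_subset_Ioo (by linarith) (by linarith))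
      have hchain := dbl_chain hdbl (x - 3/2*r) 3 (r/2) (by linarith)
        (by refine (Set.Ioo_subset_Ioo ?_ ?_).trans hsub <;> nlinarith)
      have hdblLt : ν (Ioo (x - 2*r) (x + 2*r)) ≤ Cd^3 * ν (Ioo (x - 2*r) (x - r)) := by
        have h1 : ν (Ioo (x - 2*r) (x + 2*r)) ≤
            ν (Ioo (x - 3/2*r - 2^3*(r/2)) (x - 3/2*r + 2^3*(r/2))) := by
          apply measure_mono; apply Set.Ioo_subset_Ioo <;> nlinarith
        have h2 : Ioo (x - 3/2*r - r/2) (x - 3/2*r + r/2) = Ioo (x - 2*r) (x - r) := by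
          congr 1 <;> ring
        rw [h2] at hchain
        exact h1.trans hchain
      have hcomb : ENNReal.ofReal ((β - α)/2) * ν (Ioo (x - 2*r) (x - r)) ≤
          (RHS' * Cd^3) * ν (Ioo (x - 2*r) (x - r)) := by
        calc ENNReal.ofReal ((β - α)/2) * ν (Ioo (x - 2*r) (x - r))
            ≤ RHS' * ν (Ioo (x - 2*r) (x + 2*r)) := hlow.trans hT2
          _ ≤ RHS' * (Cd^3 * ν (Ioo (x - 2*r) (x - r))) := mul_le_mul_right hdblLt _
          _ = (RHS' * Cd^3) * ν (Ioo (x - 2*r) (x - r)) := by ring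
      exact (ENNReal.mul_le_mul_iff_left hνLt.1.ne' hνLt.2.ne).1 hcomb
  -- finish
  have hQN : PoinRHS ν (fun t => ENNReal.ofReal (gN t)) p (Ioo (x - lam*(2*r)) (x + lam*(2*r)))
      ≤ Q := by
    rw [hQdef]
    show ((∫⁻ t in Ioo (x - lam*(2*r)) (x + lam*(2*r)), (ENNReal.ofReal (gN t))^p ∂ν) /
        ν (Ioo (x - lam*(2*r)) (x + lam*(2*r))))^(1/p) ≤
      ((∫⁻ t in Ioo (x - lam*(2*r)) (x + lam*(2*r)), (ENNReal.ofReal (g t))^p ∂ν) /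
        ν (Ioo (x - lam*(2*r)) (x + lam*(2*r))))^(1/p)
    refine ENNReal.rpow_le_rpow ?_ (one_div_nonneg.2 hp0.le)
    refine ENNReal.div_le_div_right ?_ _
    refine lintegral_mono fun t => ?_
    exact ENNReal.rpow_le_rpow (ENNReal.ofReal_le_ofReal (min_le_left _ _)) hp0.le
  have hconst2 : 2 * ENNReal.ofReal (C * (2*r)) = ENNReal.ofReal (4*C) * ENNReal.ofReal r := by
    rw [show ((2:ℝ≥0∞)) = ENNReal.ofReal 2 from (ENNReal.ofReal_ofNat 2).symm,
      ← ENNReal.ofReal_mul (by norm_num : (0:ℝ) ≤ 2),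
      ← ENNReal.ofReal_mul (by linarith : (0:ℝ) ≤ 4*C)]
    congr 1; ring
  have h2 : ENNReal.ofReal (β - α) = 2 * ENNReal.ofReal ((β - α)/2) := by
    rw [show ((2:ℝ≥0∞)) = ENNReal.ofReal 2 from (ENNReal.ofReal_ofNat 2).symm,
      ← ENNReal.ofReal_mul (by norm_num : (0:ℝ) ≤ 2)]
    congr 1; ring
  calc (∫⁻ t in Ioo (x - r) (x + r), ENNReal.ofReal (gN t))
      = 2 * ENNReal.ofReal ((β - α)/2) := by rw [hval, h2]
    _ ≤ 2 * (RHS' * Cd^3) := mul_le_mul_right hkey 2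
    _ = (2 * ENNReal.ofReal (C * (2*r))) * Cd^3 *
          PoinRHS ν (fun t => ENNReal.ofReal (gN t)) p
            (Ioo (x - lam*(2*r)) (x + lam*(2*r))) := by rw [hRHSdef]; ring
    _ = ENNReal.ofReal (4*C) * Cd^3 * ENNReal.ofReal r *
          PoinRHS ν (fun t => ENNReal.ofReal (gN t)) p
            (Ioo (x - lam*(2*r)) (x + lam*(2*r))) := by rw [hconst2]; ring
    _ ≤ ENNReal.ofReal (4*C) * Cd^3 * ENNReal.ofReal r * Q := mul_le_mul_right hQN _

lemma combineA (μ ν : Measure ℝ) (hν : IsMeasureOnR ν) (hle : ν ≤ μ)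
    (p : ℝ) (hp : 1 ≤ p)
    (Cd : ℝ≥0∞) (hCd0 : Cd ≠ 0) (hCdt : Cd ≠ ⊤) (B₀ : Set ℝ) (hdbl : DoublingWithinC ν Cd B₀)
    (C lam : ℝ) (hC : 0 < C) (hlam : 1 ≤ lam) (hP : PoincareWithinC ν p C lam B₀)
    (k : ℕ) (hlamk : lam ≤ 2^k)
    (x r : ℝ) (hr : 0 < r)
    (hsub8 : Ioo (x - 8*lam*r) (x + 8*lam*r) ⊆ B₀)
    (hsubch : Ioo (x - 2^k*(lam*(2*r))) (x + 2^k*(lam*(2*r))) ⊆ B₀)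
    (g : ℝ → ℝ) (hg0 : ∀ t, 0 ≤ g t) (hgm : Measurable g)
    (hhalf : μ (Ioo (x - 2^(k+1)*r) (x + 2^(k+1)*r)) ≤
      2 * ν (Ioo (x - 2^(k+1)*r) (x + 2^(k+1)*r))) :
    (∫⁻ t in Ioo (x - r) (x + r), ENNReal.ofReal (g t)) ≤
      (ENNReal.ofReal (4*C) * Cd^3 * (1 + 2 * Cd^k)) * ENNReal.ofReal r *
        PoinRHS μ (fun t => ENNReal.ofReal (g t)) p
          (Ioo (x - 2^(k+1)*r) (x + 2^(k+1)*r)) := by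
  have hp0 : (0:ℝ) < p := by linarith
  have hpinv0 : (0:ℝ) ≤ 1/p := one_div_nonneg.2 hp0.le
  have hpinv1 : 1/p ≤ 1 := by rw [div_le_one hp0]; linarith
  have hpow : (0:ℝ) < 2^k := by positivity
  have hlem := lemA ν hν p hp Cd hCd0 hCdt B₀ hdbl C lam hC hlam hP x r hr hsub8 g hg0 hgm
  set S := Ioo (x - 2^(k+1)*r) (x + 2^(k+1)*r) with hSdef
  set Sν := Ioo (x - lam*(2*r)) (x + lam*(2*r)) with hSνdef
  have hνSν := hν (x - lam*(2*r)) (x + lam*(2*r)) (by nlinarith)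
  have hSsub : Sν ⊆ S := by
    rw [hSνdef, hSdef]
    have h1 : lam * 2 * r ≤ 2^(k+1) * r := by
      rw [show ((2:ℝ))^(k+1) = 2^k * 2 by ring]
      nlinarith [mul_nonneg (mul_nonneg hpow.le (by linarith : (0:ℝ) ≤ 2*r))
        (by linarith : (0:ℝ) ≤ lam - 1)]
    apply Set.Ioo_subset_Ioo <;> nlinarith
  set X := ∫⁻ t in S, (ENNReal.ofReal (g t))^p ∂μ with hXdef
  have hnum : (∫⁻ t in Sν, (ENNReal.ofReal (g t))^p ∂ν) ≤ X :=
    lintegral_mono' (Measure.restrict_mono hSsub hle) le_rfl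
  have hden : ν S ≤ Cd^k * ν Sν := by
    have h1 : ν S ≤ ν (Ioo (x - 2^k*(lam*(2*r))) (x + 2^k*(lam*(2*r)))) := by
      apply measure_mono
      rw [hSdef]
      have h2 : (2:ℝ)^(k+1)*r ≤ 2^k*(lam*(2*r)) := by
        rw [show ((2:ℝ))^(k+1) = 2^k * 2 by ring]
        nlinarith [mul_nonneg (mul_nonneg hpow.le (by linarith : (0:ℝ) ≤ 2*r))
          (by linarith : (0:ℝ) ≤ lam - 1)]
      apply Set.Ioo_subset_Ioo <;> linarith
    exact h1.trans (dbl_chain hdbl x k (lam*(2*r)) (by nlinarith) hsubch)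
  have hQ : PoinRHS ν (fun t => ENNReal.ofReal (g t)) p Sν ≤
      (1 + 2*Cd^k) * PoinRHS μ (fun t => ENNReal.ofReal (g t)) p S := by
    have hfrac : (∫⁻ t in Sν, (ENNReal.ofReal (g t))^p ∂ν) / ν Sν ≤ (2*Cd^k) * (X / μ S) := by
      calc (∫⁻ t in Sν, (ENNReal.ofReal (g t))^p ∂ν) / ν Sν
          ≤ X / ν Sν := ENNReal.div_le_div_right hnum _
        _ = (Cd^k * X) / (Cd^k * ν Sν) :=
            (ENNReal.mul_div_mul_left _ _ (pow_ne_zero k hCd0) (ENNReal.pow_ne_top hCdt)).symm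
        _ ≤ (Cd^k * X) / ν S := ENNReal.div_le_div_left hden _
        _ = (2 * (Cd^k * X)) / (2 * ν S) :=
            (ENNReal.mul_div_mul_left _ _ (by norm_num) (by norm_num)).symm
        _ ≤ (2 * (Cd^k * X)) / μ S := ENNReal.div_le_div_left hhalf _
        _ = (2*Cd^k) * (X / μ S) := by rw [← mul_assoc, mul_div_assoc]
    calc PoinRHS ν (fun t => ENNReal.ofReal (g t)) p Sν
        = ((∫⁻ t in Sν, (ENNReal.ofReal (g t))^p ∂ν) / ν Sν)^(1/p) := rfl
      _ ≤ ((2*Cd^k) * (X / μ S))^(1/p) := ENNReal.rpow_le_rpow hfrac hpinv0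
      _ = (2*Cd^k)^(1/p) * (X / μ S)^(1/p) := ENNReal.mul_rpow_of_nonneg _ _ hpinv0
      _ ≤ (1 + 2*Cd^k) * (X / μ S)^(1/p) :=
          mul_le_mul_left (rpow_le_one_add _ hpinv0 hpinv1) _
      _ = (1 + 2*Cd^k) * PoinRHS μ (fun t => ENNReal.ofReal (g t)) p S := rfl
  calc (∫⁻ t in Ioo (x - r) (x + r), ENNReal.ofReal (g t))
      ≤ ENNReal.ofReal (4*C) * Cd^3 * ENNReal.ofReal r *
          PoinRHS ν (fun t => ENNReal.ofReal (g t)) p Sν := hlem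
    _ ≤ ENNReal.ofReal (4*C) * Cd^3 * ENNReal.ofReal r *
          ((1 + 2*Cd^k) * PoinRHS μ (fun t => ENNReal.ofReal (g t)) p S) :=
        mul_le_mul_right hQ _
    _ = (ENNReal.ofReal (4*C) * Cd^3 * (1 + 2*Cd^k)) * ENNReal.ofReal r *
          PoinRHS μ (fun t => ENNReal.ofReal (g t)) p S := by ring

end AuxProofs

set_option maxHeartbeats 2000000

/-- the sum of two locally `p`-admissible measures on ℝ is
locally `p`-admissible. -/
theorem sum_locally_admissible (p : ℝ) (hp : 1 ≤ p) (μ₁ μ₂ : Measure ℝ)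
    (hμ₁ : IsMeasureOnR μ₁) (hμ₂ : IsMeasureOnR μ₂)
    (h₁ : LocallyAdmissible μ₁ p) (h₂ : LocallyAdmissible μ₂ p) :
    LocallyAdmissible (μ₁ + μ₂) p := by
  intro x₀
  obtain ⟨R₁, hR₁, ⟨Cd₁, hCd₁0, hCd₁t, hdbl₁⟩, C₁, hC₁, lam₁, hlam₁, hP₁⟩ := h₁ x₀
  obtain ⟨R₂, hR₂, ⟨Cd₂, hCd₂0, hCd₂t, hdbl₂⟩, C₂, hC₂, lam₂, hlam₂, hP₂⟩ := h₂ x₀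
  obtain ⟨k, hk⟩ := exists_nat_ge (max lam₁ lam₂)
  have h2k : max lam₁ lam₂ ≤ (2:ℝ)^k := by
    refine hk.trans ?_
    exact_mod_cast (Nat.lt_two_pow_self (n := k)).le
  have hlam₁k : lam₁ ≤ (2:ℝ)^k := (le_max_left _ _).trans h2k
  have hlam₂k : lam₂ ≤ (2:ℝ)^k := (le_max_right _ _).trans h2k
  have hpk1 : (1:ℝ) ≤ 2^k := one_le_pow₀ one_le_two
  obtain ⟨T, hT1, hT8, hTch⟩ : ∃ T : ℝ, 1 ≤ T ∧ 8*2^k ≤ T ∧ 2^k*2^k*2 ≤ T := by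
    refine ⟨2^(2*k+3), one_le_pow₀ one_le_two, ?_, ?_⟩ <;>
      rw [show 2*k+3 = k+(k+3) from by ring, pow_add, pow_add] <;>
      norm_num <;> nlinarith [mul_nonneg (mul_nonneg (by linarith : (0:ℝ) ≤ 2^k - 1)
        (by positivity : (0:ℝ) ≤ (2:ℝ)^k)) (by norm_num : (0:ℝ) ≤ 8)]
  have hminpos : 0 < min R₁ R₂ := lt_min hR₁ hR₂
  obtain ⟨R, hR0, hTR⟩ : ∃ R : ℝ, 0 < R ∧ T * R ≤ min R₁ R₂ := by
    refine ⟨min R₁ R₂ / T, div_pos hminpos (by linarith), ?_⟩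
    rw [mul_div_cancel₀ _ (by linarith : T ≠ 0)]
  have hTR₁ : T * R ≤ R₁ := hTR.trans (min_le_left _ _)
  have hTR₂ : T * R ≤ R₂ := hTR.trans (min_le_right _ _)
  have hRle₁ : R ≤ R₁ := by nlinarith
  have hRle₂ : R ≤ R₂ := by nlinarith
  have hpowk : (0:ℝ) < 2^k := by positivity
  refine ⟨R, hR0, ⟨Cd₁ + Cd₂, ?_, ?_, ?_⟩, ?_⟩
  · exact lt_of_lt_of_le hCd₁0 le_self_add
  · exact ENNReal.add_lt_top.2 ⟨hCd₁t, hCd₂t⟩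
  · -- doubling
    intro x r hr hB
    have hB₁ : Ioo (x - r) (x + r) ⊆ Ioo (x₀ - R₁) (x₀ + R₁) :=
      hB.trans (Set.Ioo_subset_Ioo (by linarith) (by linarith))
    have hB₂ : Ioo (x - r) (x + r) ⊆ Ioo (x₀ - R₂) (x₀ + R₂) :=
      hB.trans (Set.Ioo_subset_Ioo (by linarith) (by linarith))
    rw [Measure.add_apply, Measure.add_apply]
    calc μ₁ (Ioo (x - 2*r) (x + 2*r)) + μ₂ (Ioo (x - 2*r) (x + 2*r))
        ≤ Cd₁ * μ₁ (Ioo (x - r) (x + r)) + Cd₂ * μ₂ (Ioo (x - r) (x + r)) :=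
          add_le_add (hdbl₁ x r hr hB₁) (hdbl₂ x r hr hB₂)
      _ ≤ (Cd₁ + Cd₂) * μ₁ (Ioo (x - r) (x + r)) +
            (Cd₁ + Cd₂) * μ₂ (Ioo (x - r) (x + r)) :=
          add_le_add (mul_le_mul_left le_self_add _) (mul_le_mul_left le_add_self _)
      _ = (Cd₁ + Cd₂) * (μ₁ (Ioo (x - r) (x + r)) + μ₂ (Ioo (x - r) (x + r))) := by ring
  · -- Poincaré
    set E : ℝ≥0∞ := ENNReal.ofReal (4*C₁) * Cd₁^3 * (1 + 2*Cd₁^k) +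
      ENNReal.ofReal (4*C₂) * Cd₂^3 * (1 + 2*Cd₂^k) with hEdef
    have hne : ∀ (c : ℝ) (D : ℝ≥0∞), D ≠ ⊤ → ENNReal.ofReal c * D^3 * (1 + 2*D^k) ≠ ⊤ := by
      intro c D hDt
      exact ENNReal.mul_ne_top (ENNReal.mul_ne_top ENNReal.ofReal_ne_top
        (ENNReal.pow_ne_top hDt)) (ENNReal.add_ne_top.2 ⟨ENNReal.one_ne_top,
          ENNReal.mul_ne_top (by norm_num) (ENNReal.pow_ne_top hDt)⟩)
    have hEt : E ≠ ⊤ := by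
      rw [hEdef]
      exact ENNReal.add_ne_top.2 ⟨hne _ _ hCd₁t.ne, hne _ _ hCd₂t.ne⟩
    have hEC : E ≤ ENNReal.ofReal (E.toReal + 1) := by
      conv_lhs => rw [← ENNReal.ofReal_toReal hEt]
      exact ENNReal.ofReal_le_ofReal (by linarith)
    refine ⟨E.toReal + 1, by positivity, 2^(k+1), one_le_pow₀ one_le_two, ?_⟩
    intro x r hr hB u g huint hug
    -- extract box bounds
    have hbox := (Set.Ioo_subset_Ioo_iff (by linarith : x - r < x + r)).1 hB
    have hxl : x₀ - R ≤ x - r := hbox.1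
    have hxr : x + r ≤ x₀ + R := hbox.2
    have hpowk1 : (1:ℝ) ≤ 2^(k+1) := one_le_pow₀ one_le_two
    -- measures of balls
    have hμ₁B := hμ₁ (x - r) (x + r) (by linarith)
    have hμ₂B := hμ₂ (x - r) (x + r) (by linarith)
    have hrS : (0:ℝ) < 2^(k+1)*r := by positivity
    have hμ₁S := hμ₁ (x - 2^(k+1)*r) (x + 2^(k+1)*r) (by linarith)
    have hμ₂S := hμ₂ (x - 2^(k+1)*r) (x + 2^(k+1)*r) (by linarith)
    have hBsub : Ioo (x - r) (x + r) ⊆ Ioo (x - 2^(k+1)*r) (x + 2^(k+1)*r) := by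
      apply Set.Ioo_subset_Ioo <;> nlinarith
    have hμB0 : (μ₁ + μ₂) (Ioo (x - r) (x + r)) ≠ 0 := by
      rw [Measure.add_apply]
      exact (lt_of_lt_of_le hμ₁B.1 le_self_add).ne'
    have hμBt : (μ₁ + μ₂) (Ioo (x - r) (x + r)) ≠ ⊤ := by
      rw [Measure.add_apply]
      exact (ENNReal.add_lt_top.2 ⟨hμ₁B.2, hμ₂B.2⟩).ne
    -- step 1
    have hstep1 : PoinLHS (μ₁ + μ₂) u (Ioo (x - r) (x + r)) ≤
        ∫⁻ t in Ioo (x - r) (x + r), ENNReal.ofReal (g t) :=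
      avg_dev_le (μ₁ + μ₂) x r hμB0 hμBt u g (huint.mono_set hBsub)
        (fun a b hab hIcc => hug.2.2 a b hab (hIcc.trans hBsub))
    -- choose the heavier measure
    have hhalf : (μ₁ + μ₂) (Ioo (x - 2^(k+1)*r) (x + 2^(k+1)*r)) ≤
          2 * μ₁ (Ioo (x - 2^(k+1)*r) (x + 2^(k+1)*r)) ∨
        (μ₁ + μ₂) (Ioo (x - 2^(k+1)*r) (x + 2^(k+1)*r)) ≤
          2 * μ₂ (Ioo (x - 2^(k+1)*r) (x + 2^(k+1)*r)) := by
      rcases le_total (μ₁ (Ioo (x - 2^(k+1)*r) (x + 2^(k+1)*r)))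
        (μ₂ (Ioo (x - 2^(k+1)*r) (x + 2^(k+1)*r))) with h | h
      · right; rw [Measure.add_apply, two_mul]; exact add_le_add h le_rfl
      · left; rw [Measure.add_apply, two_mul]; exact add_le_add le_rfl h
    -- inclusions needed by combineA, for each i
    have hincl8 : ∀ lam' R' : ℝ, 1 ≤ lam' → lam' ≤ 2^k → T * R ≤ R' →
        Ioo (x - 8*lam'*r) (x + 8*lam'*r) ⊆ Ioo (x₀ - R') (x₀ + R') := by
      intro lam' R' hl1 hlk hTR'
      have h8 : 8*lam' ≤ T := by nlinarith
      have hsR : (8*lam') * R ≤ R' := by nlinarith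
      exact scale_incl hr (by linarith) hxl hxr hsR
    have hinclch : ∀ lam' R' : ℝ, 1 ≤ lam' → lam' ≤ 2^k → T * R ≤ R' →
        Ioo (x - 2^k*(lam'*(2*r))) (x + 2^k*(lam'*(2*r))) ⊆ Ioo (x₀ - R') (x₀ + R') := by
      intro lam' R' hl1 hlk hTR'
      have hs1 : (1:ℝ) ≤ 2^k*lam'*2 := by nlinarith
      have hsT : 2^k*lam'*2 ≤ T := by
        have : (2:ℝ)^k*lam'*2 ≤ 2^k*2^k*2 := by
          nlinarith [mul_nonneg hpowk.le (by linarith : (0:ℝ) ≤ 2^k - lam')]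
        linarith
      have hsR : (2^k*lam'*2) * R ≤ R' := by nlinarith
      have h := scale_incl hr hs1 hxl hxr hsR
      rwa [show x - 2^k*lam'*2*r = x - 2^k*(lam'*(2*r)) by ring,
        show x + 2^k*lam'*2*r = x + 2^k*(lam'*(2*r)) by ring] at h
    -- conclude in each case
    rcases hhalf with hh | hh
    · have hmain := combineA (μ₁ + μ₂) μ₁ hμ₁ (Measure.le_add_right le_rfl) p hp
        Cd₁ hCd₁0.ne' hCd₁t.ne _ hdbl₁ C₁ lam₁ hC₁ hlam₁ hP₁ k hlam₁k x r hr
        (hincl8 lam₁ R₁ hlam₁ hlam₁k hTR₁) (hinclch lam₁ R₁ hlam₁ hlam₁k hTR₁)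
        g hug.1 hug.2.1 hh
      calc PoinLHS (μ₁ + μ₂) u (Ioo (x - r) (x + r))
          ≤ ∫⁻ t in Ioo (x - r) (x + r), ENNReal.ofReal (g t) := hstep1
        _ ≤ (ENNReal.ofReal (4*C₁) * Cd₁^3 * (1 + 2*Cd₁^k)) * ENNReal.ofReal r *
              PoinRHS (μ₁ + μ₂) (fun t => ENNReal.ofReal (g t)) p
                (Ioo (x - 2^(k+1)*r) (x + 2^(k+1)*r)) := hmain
        _ ≤ ENNReal.ofReal (E.toReal + 1) * ENNReal.ofReal r *
              PoinRHS (μ₁ + μ₂) (fun t => ENNReal.ofReal (g t)) p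
                (Ioo (x - 2^(k+1)*r) (x + 2^(k+1)*r)) := by
            refine mul_le_mul_left (mul_le_mul_left ?_ _) _
            exact le_trans le_self_add (hEdef ▸ hEC)
        _ = ENNReal.ofReal ((E.toReal + 1) * r) *
              PoinRHS (μ₁ + μ₂) (fun t => ENNReal.ofReal (g t)) p
                (Ioo (x - 2^(k+1)*r) (x + 2^(k+1)*r)) := by
            rw [← ENNReal.ofReal_mul (by positivity)]
    · have hmain := combineA (μ₁ + μ₂) μ₂ hμ₂ (Measure.le_add_left le_rfl) p hp
        Cd₂ hCd₂0.ne' hCd₂t.ne _ hdbl₂ C₂ lam₂ hC₂ hlam₂ hP₂ k hlam₂k x r hr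
        (hincl8 lam₂ R₂ hlam₂ hlam₂k hTR₂) (hinclch lam₂ R₂ hlam₂ hlam₂k hTR₂)
        g hug.1 hug.2.1 hh
      calc PoinLHS (μ₁ + μ₂) u (Ioo (x - r) (x + r))
          ≤ ∫⁻ t in Ioo (x - r) (x + r), ENNReal.ofReal (g t) := hstep1
        _ ≤ (ENNReal.ofReal (4*C₂) * Cd₂^3 * (1 + 2*Cd₂^k)) * ENNReal.ofReal r *
              PoinRHS (μ₁ + μ₂) (fun t => ENNReal.ofReal (g t)) p
                (Ioo (x - 2^(k+1)*r) (x + 2^(k+1)*r)) := hmain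
        _ ≤ ENNReal.ofReal (E.toReal + 1) * ENNReal.ofReal r *
              PoinRHS (μ₁ + μ₂) (fun t => ENNReal.ofReal (g t)) p
                (Ioo (x - 2^(k+1)*r) (x + 2^(k+1)*r)) := by
            refine mul_le_mul_left (mul_le_mul_left ?_ _) _
            exact le_trans le_add_self (hEdef ▸ hEC)
        _ = ENNReal.ofReal ((E.toReal + 1) * r) *
              PoinRHS (μ₁ + μ₂) (fun t => ENNReal.ofReal (g t)) p
                (Ioo (x - 2^(k+1)*r) (x + 2^(k+1)*r)) := by
            rw [← ENNReal.ofReal_mul (by positivity)]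
end
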